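/- arXiv:0909.1424 — 3 statements merged into one kernel-verified Lean document; each statement's English description precedes it below -/
import Mathlib

section
/- Let {π1,π2} be a pair of negative skew-symmetric lexicographic arrays of degree 2t, with π1 = (b_1…b_t / a_1…a_t) and π2 = (c_1…c_t / d_1…d_t), and let (P^(i),Q^(i)) be the intermediate notched bitableaux produced by the OBRSK algorithm. If l, l' ∈ {1,…,t} satisfy l < l' and b_l = b_{l'}, then the number (counted from the top) of the row of P^(l') in which the entry d_{t+1−l'} was placed is strictly greater than the number of the row of P^(l') in which the entry d_{t+1−l} was placed. -/
namespace OBRSKPaper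

/-! ### Pairs of two-row arrays -/

/-- A pair of two-row arrays of positive integers: `π1` has top row `b` and bottom row `a`;
`π2` has top row `c` and bottom row `d`.  Columns are listed from left to right. -/
structure ArrayPair where
  a : List ℕ
  b : List ℕ
  c : List ℕ
  d : List ℕ

/-- The duality property for a list of (entry, dual entry) pairs: if `x ≤ y` then
`dual x ≥ dual y`, if `x < y` then `dual x > dual y`, and if `x = y` then `dual x = dual y`. -/
def DualityProp (l : List (ℕ × ℕ)) : Prop :=
  ∀ p ∈ l, ∀ q ∈ l,
    (p.1 ≤ q.1 → q.2 ≤ p.2) ∧ (p.1 < q.1 → q.2 < p.2) ∧ (p.1 = q.1 → p.2 = q.2)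

/-- The two-row array with top row `top` and bottom row `bot` is lexicographic:
the top row weakly decreases, and bottom-row entries weakly decrease below equal
top-row entries. -/
def LexTwoRow (top bot : List ℕ) : Prop :=
  ∀ k, k + 1 < top.length →
    top.getD (k+1) 0 ≤ top.getD k 0 ∧
    (top.getD (k+1) 0 = top.getD k 0 → bot.getD (k+1) 0 ≤ bot.getD k 0)

namespace ArrayPair

/-- The number of columns of each array of the pair. -/
def t (π : ArrayPair) : ℕ := π.b.length

/-- The degree of a pair of arrays: twice the number of columns. -/
def degree (π : ArrayPair) : ℕ := 2 * π.t

def eqLen (π : ArrayPair) : Prop :=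
  π.a.length = π.t ∧ π.c.length = π.t ∧ π.d.length = π.t

/-- The list of (entry, dual entry) pairs of a pair of arrays: the dual of `a i` is
`c (t+1-i)`, of `b i` is `d (t+1-i)`, of `c i` is `a (t+1-i)`, of `d i` is `b (t+1-i)`. -/
def entryDual (π : ArrayPair) : List (ℕ × ℕ) :=
  π.a.zip π.c.reverse ++ π.b.zip π.d.reverse ++ π.c.zip π.a.reverse ++ π.d.zip π.b.reverse

/-- `{π1, π2}` is a pair of skew-symmetric lexicographic arrays. -/
def SkewSymmLex (π : ArrayPair) : Prop :=
  π.eqLen ∧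
  (∀ x ∈ π.a ++ π.b ++ π.c ++ π.d, 0 < x) ∧
  LexTwoRow π.b π.a ∧
  LexTwoRow π.d π.c ∧
  (∀ p ∈ π.a.zip π.d.reverse, p.1 < p.2) ∧
  (∀ p ∈ π.b.zip π.c.reverse, p.1 < p.2) ∧
  DualityProp π.entryDual ∧
  (∀ i < π.t,
    (π.a.getD i 0 < π.b.getD i 0 → π.d.getD (π.t - 1 - i) 0 < π.c.getD (π.t - 1 - i) 0) ∧
    (π.b.getD i 0 < π.a.getD i 0 → π.c.getD (π.t - 1 - i) 0 < π.d.getD (π.t - 1 - i) 0))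

def Negative (π : ArrayPair) : Prop := ∀ p ∈ π.a.zip π.b, p.1 < p.2

def Positive (π : ArrayPair) : Prop := ∀ p ∈ π.a.zip π.b, p.2 < p.1

def Nonvanishing (π : ArrayPair) : Prop := ∀ p ∈ π.a.zip π.b, p.1 ≠ p.2

/-- The negative part of a pair: the columns of `π1` with `a i < b i`, together with
their dual columns of `π2` (those with `d j < c j`). -/
def negPart (π : ArrayPair) : ArrayPair where
  a := ((π.a.zip π.b).filter (fun p => decide (p.1 < p.2))).map Prod.fst
  b := ((π.a.zip π.b).filter (fun p => decide (p.1 < p.2))).map Prod.snd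
  c := ((π.c.zip π.d).filter (fun p => decide (p.2 < p.1))).map Prod.fst
  d := ((π.c.zip π.d).filter (fun p => decide (p.2 < p.1))).map Prod.snd

/-- The positive part of a pair: the columns of `π1` with `a i > b i`, together with
their dual columns of `π2`. -/
def posPart (π : ArrayPair) : ArrayPair where
  a := ((π.a.zip π.b).filter (fun p => decide (p.2 < p.1))).map Prod.fst
  b := ((π.a.zip π.b).filter (fun p => decide (p.2 < p.1))).map Prod.snd
  c := ((π.c.zip π.d).filter (fun p => decide (p.1 < p.2))).map Prod.fst
  d := ((π.c.zip π.d).filter (fun p => decide (p.1 < p.2))).map Prod.snd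

/-- The bijection ψ from pairs of arrays to pairs of multisets on ℕ²:
`{(b/a),(c/d)} ↦ ({(a i, b i)}, {(d i, c i)})`. -/
def toMS (π : ArrayPair) : Multiset (ℕ × ℕ) × Multiset (ℕ × ℕ) :=
  (↑(π.a.zip π.b), ↑(π.d.zip π.c))

/-- The pair corresponding to `{U1^(k), U2^(k)}` : the first `k` columns of `π1`
together with the last `k` columns of `π2`. -/
def prefixPair (π : ArrayPair) (k : ℕ) : ArrayPair :=
  ⟨π.a.take k, π.b.take k, π.c.drop (π.t - k), π.d.drop (π.t - k)⟩

end ArrayPair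

/-- Comparison placing columns in decreasing lexicographic order. -/
def lexSortKey : ℕ × ℕ → ℕ × ℕ → Bool := fun x y =>
  decide (y.1 < x.1 ∨ (x.1 = y.1 ∧ y.2 ≤ x.2))

/-- The involution `L` : `L {π1, π2} := {l(π1), lᵗ(π2)}`, where `l` switches the two rows
and rearranges columns so that the result is lexicographic, and `lᵗ` switches the two rows
and rearranges columns so that the transpose of the result is lexicographic. -/
def Lmap (π : ArrayPair) : ArrayPair :=
  let s1 := (π.a.zip π.b).mergeSort lexSortKey
  let s2 := (π.c.zip π.d).mergeSort lexSortKey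
  ⟨s1.map Prod.snd, s1.map Prod.fst, s2.map Prod.snd, s2.map Prod.fst⟩

/-! ### Notched bitableaux -/

/-- A notched bitableau: a pair of fillings (lists of rows, top to bottom). -/
structure Bitab where
  P : List (List ℕ)
  Q : List (List ℕ)

/-- Count, as an integer, of entries of the list that are `≤ z`. -/
def cntLE (l : List ℕ) (z : ℕ) : ℤ := ((l.filter (fun x => decide (x ≤ z))).length : ℤ)

/-- `diffLE A B A' B'` expresses `A − B ≤ A' − B'` for the multisets
`A − B := A ∪̇ (ℕ∖B)`: for every `z`, the number of elements `≤ z` of `A − B` is at least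
the number of elements `≤ z` of `A' − B'`. -/
def diffLE (A B A' B' : List ℕ) : Prop :=
  ∀ z : ℕ, cntLE A' z - cntLE B' z ≤ cntLE A z - cntLE B z

/-- `diffLT A B A' B'` expresses `A − B < A' − B'`. -/
def diffLT (A B A' B' : List ℕ) : Prop := diffLE A B A' B' ∧ ¬ diffLE A' B' A B

namespace Bitab

/-- The degree: total number of boxes of `P`. -/
def degree (B : Bitab) : ℕ := (B.P.map List.length).sum

def SameShape (B : Bitab) : Prop := B.P.map List.length = B.Q.map List.length

def RowStrict (B : Bitab) : Prop :=
  (∀ r ∈ B.P, r.Pairwise (· < ·)) ∧ (∀ r ∈ B.Q, r.Pairwise (· < ·))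

def EntriesPos (B : Bitab) : Prop :=
  (∀ r ∈ B.P, ∀ x ∈ r, 0 < x) ∧ (∀ r ∈ B.Q, ∀ x ∈ r, 0 < x)

def Semistandard (B : Bitab) : Prop :=
  B.SameShape ∧ B.RowStrict ∧ B.EntriesPos ∧
  ∀ i, i + 1 < B.P.length →
    diffLE (B.P.getD i []) (B.Q.getD i []) (B.P.getD (i+1) []) (B.Q.getD (i+1) [])

/-- Negative: semistandard and the last row satisfies `P_r − Q_r < ∅`. -/
def Negative (B : Bitab) : Prop :=
  B.Semistandard ∧ ∀ i, B.P.length = i + 1 → diffLT (B.P.getD i []) (B.Q.getD i []) [] []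

/-- Positive: semistandard and the first row satisfies `∅ < P_1 − Q_1`. -/
def Positive (B : Bitab) : Prop :=
  B.Semistandard ∧ (B.P ≠ [] → diffLT [] [] (B.P.getD 0 []) (B.Q.getD 0 []))

/-- Nonvanishing: semistandard and every row is negative or positive. -/
def Nonvanishing (B : Bitab) : Prop :=
  B.Semistandard ∧ ∀ i < B.P.length,
    diffLT (B.P.getD i []) (B.Q.getD i []) [] [] ∨ diffLT [] [] (B.P.getD i []) (B.Q.getD i [])

/-- The list of (entry, dual entry) pairs of a notched bitableau: the dual of the entry in
position `(i,j)` of `P` is the entry in position `(i, k_i+1−j)` of `Q` and vice versa. -/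
def entryDual (B : Bitab) : List (ℕ × ℕ) :=
  ((B.P.zip B.Q).map (fun pq => pq.1.zip pq.2.reverse)).flatten ++
  ((B.P.zip B.Q).map (fun pq => pq.2.zip pq.1.reverse)).flatten

/-- A skew-symmetric notched bitableau: semistandard, of even size, satisfying the
duality property. -/
def SkewSymm (B : Bitab) : Prop :=
  B.Semistandard ∧ (∀ r ∈ B.P, Even r.length) ∧ DualityProp B.entryDual

end Bitab

/-- The involution ι : reverse the order of the rows of `(Q, P)`. -/
def iota (B : Bitab) : Bitab := ⟨B.Q.reverse, B.P.reverse⟩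

/-! ### The OBRSK algorithm -/

/-- Insert `x` into the list `l` at (0-based) position `i`, shifting later entries right. -/
def insertAt (l : List ℕ) (i : ℕ) (x : ℕ) : List ℕ := l.take i ++ x :: l.drop i

/-- One row of bounded insertion: `x` bumps the smallest entry of the row that is `≥ x`
and `< b`; if there is no such entry, `x` is placed in a new box at the right end of the
entries `< b`.  Returns the new row, the bumped entry (if any), and the 1-indexed forward
position of the new/overwritten box. -/
def insertRowP (b x : ℕ) (row : List ℕ) : List ℕ × Option ℕ × ℕ :=
  match row.findIdx? (fun y => decide (x ≤ y ∧ y < b)) with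
  | some j => (row.set j x, some (row.getD j 0), j + 1)
  | none =>
      let j := (row.takeWhile (fun y => decide (y < b))).length
      (insertAt row j x, none, j + 1)

/-- Bounded insertion of `x` into the rows of `P`, bounded by `b`.  Returns the new rows
and the list of 1-indexed forward positions of the bumped/new boxes, row by row. -/
def insertP (b : ℕ) : List (List ℕ) → ℕ → List (List ℕ) × List ℕ
  | [], x => ([[x]], [1])
  | row :: rest, x =>
      match insertRowP b x row with
      | (row', none, j) => (row' :: rest, [j])
      | (row', some y, j) =>
          let (rest', js) := insertP b rest y
          (row' :: rest', j :: js)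

/-- Dual insertion of `x` into the rows of `Q`, at the backward positions recorded in `js`:
in each intermediate row the backward `j`-th entry is bumped, and in the final row the
incoming value is placed in a new box at the backward `j`-th position. -/
def insertQ : List (List ℕ) → List ℕ → ℕ → List (List ℕ)
  | rows, [], _ => rows
  | [], _ :: _, x => [[x]]
  | row :: rest, [j], x => insertAt row (row.length + 1 - j) x :: rest
  | row :: rest, j :: js, x =>
      row.set (row.length - j) x :: insertQ rest js (row.getD (row.length - j) 0)

/-- Modify the `k`-th (0-based) row of a list of rows. -/
def modifyRow (rows : List (List ℕ)) (k : ℕ) (f : List ℕ → List ℕ) : List (List ℕ) :=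
  rows.take k ++ (match rows.drop k with
    | [] => []
    | r :: rest => f r :: rest)

/-- One step of the OBRSK algorithm, applied with the quadruple
`(a_{i+1}, b_{i+1}, c_{t−i}, d_{t−i})`. -/
def obrskStep (PQ : List (List ℕ) × List (List ℕ)) (q : ℕ × ℕ × ℕ × ℕ) :
    List (List ℕ) × List (List ℕ) :=
  let (x, b, c, d) := q
  let Pjs := insertP b PQ.1 x
  let K := Pjs.2.length
  let Q' := insertQ PQ.2 Pjs.2 c
  (modifyRow Pjs.1 (K - 1) (fun r => r ++ [d]), modifyRow Q' (K - 1) (fun r => b :: r))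

/-- The list of quadruples `(a_{i+1}, b_{i+1}, c_{t−i}, d_{t−i})`, `i = 0, …, t−1`. -/
def ArrayPair.quads (π : ArrayPair) : List (ℕ × ℕ × ℕ × ℕ) :=
  π.a.zip (π.b.zip (π.c.reverse.zip π.d.reverse))

/-- The notched bitableau `(P^(i), Q^(i))` produced after `i` steps of the OBRSK algorithm. -/
def stepState (π : ArrayPair) (i : ℕ) : List (List ℕ) × List (List ℕ) :=
  (π.quads.take i).foldl obrskStep ([], [])

/-- The OBRSK correspondence on pairs of negative skew-symmetric lexicographic arrays:
`OBRSK {π1, π2} := (P^(t), Q^(t))`. -/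
def OBRSKneg (π : ArrayPair) : Bitab :=
  ⟨(stepState π π.t).1, (stepState π π.t).2⟩

/-- The OBRSK correspondence on pairs of positive skew-symmetric lexicographic arrays. -/
def OBRSKpos (π : ArrayPair) : Bitab := iota (OBRSKneg (Lmap π))

/-- The OBRSK correspondence on pairs of nonvanishing skew-symmetric lexicographic arrays:
the bitableau whose negative and positive parts are the OBRSK images of the negative and
positive parts of the pair. -/
def OBRSK (π : ArrayPair) : Bitab :=
  ⟨(OBRSKneg π.negPart).P ++ (OBRSKpos π.posPart).P,
   (OBRSKneg π.negPart).Q ++ (OBRSKpos π.posPart).Q⟩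

/-! ### The reverse step -/

/-- One row of reverse bounded insertion: the incoming entry `x` bumps the largest entry
of the row smaller than `x`.  Returns the new row, the bumped-out entry, and the 1-indexed
forward position of the bumped box. -/
def revBumpRow (x : ℕ) (row : List ℕ) : List ℕ × ℕ × ℕ :=
  let k := (row.filter (fun y => decide (y < x))).length
  (row.set (k - 1) x, row.getD (k - 1) 0, k)

/-- Reverse bounded insertion upward through the given rows (listed bottom-to-top);
returns the new rows, the ejected entry, and the positions of the bumped boxes. -/
def revInsertUp : List (List ℕ) → ℕ → List (List ℕ) × ℕ × List ℕ
  | [], x => ([], x, [])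
  | row :: rest, x =>
      let rj := revBumpRow x row
      let rec' := revInsertUp rest rj.2.1
      (rj.1 :: rec'.1, rec'.2.1, rj.2.2 :: rec'.2.2)

/-- Dual reverse insertion upward through the given rows of `Q` (listed bottom-to-top),
along the dual (backward) positions `js`; returns the new rows and the ejected entry. -/
def revInsertUpQ : List (List ℕ) → List ℕ → ℕ → List (List ℕ) × ℕ
  | rows, [], x => (rows, x)
  | [], _ :: _, x => ([], x)
  | row :: rest, j :: js, x =>
      let idx := row.length - j
      let rec' := revInsertUpQ rest js (row.getD idx 0)
      (row.set idx x :: rec'.1, rec'.2)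

/-- One reverse step of OBRSK: produces `(P', Q')` and the integers `a, b, c, d`. -/
def reverseStep (B : Bitab) : Bitab × ℕ × ℕ × ℕ × ℕ :=
  let b := (B.Q.flatten.min?).getD 0
  let s := B.Q.length - 1 - B.Q.reverse.findIdx (fun r => r.contains b)
  let d := ((B.P.getD s []).getLast?).getD 0
  let P1 := modifyRow B.P s List.dropLast
  let Q1 := modifyRow B.Q s List.tail
  let rowS := P1.getD s []
  let k0 := (rowS.filter (fun y => decide (y < b))).length
  let x := rowS.getD (k0 - 1) 0
  let rowS' := rowS.eraseIdx (k0 - 1)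
  let up := revInsertUp (P1.take s).reverse x
  let P' := up.1.reverse ++ rowS' :: P1.drop (s + 1)
  let rowQ := Q1.getD s []
  let vQ := rowQ.getD (rowQ.length - k0) 0
  let rowQ' := rowQ.eraseIdx (rowQ.length - k0)
  let upQ := revInsertUpQ (Q1.take s).reverse up.2.2 vQ
  let Q' := upQ.1.reverse ++ rowQ' :: Q1.drop (s + 1)
  (⟨P'.filter (fun r => decide (r ≠ [])), Q'.filter (fun r => decide (r ≠ []))⟩,
    up.2.1, b, upQ.2, d)

/-! ### Multisets on ℕ², chains, boundedness -/

/-- The order on multisets on ℕ² : `msLE S T` means `S ≤ T`, i.e.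
`S₍₁₎ − S₍₂₎ ≤ T₍₁₎ − T₍₂₎`. -/
def msLE (S T : Multiset (ℕ × ℕ)) : Prop :=
  ∀ z : ℕ,
    ((T.filter (fun p => p.1 ≤ z)).card : ℤ) - ((T.filter (fun p => p.2 ≤ z)).card : ℤ) ≤
    ((S.filter (fun p => p.1 ≤ z)).card : ℤ) - ((S.filter (fun p => p.2 ≤ z)).card : ℤ)

namespace Bitab

/-- `(P,Q)^up` : the multiset of pairs formed by the top rows. -/
def up (B : Bitab) : Multiset (ℕ × ℕ) := ↑((B.P.getD 0 []).zip (B.Q.getD 0 []))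

/-- `(P,Q)^down` : the multiset of pairs formed by the bottom rows. -/
def down (B : Bitab) : Multiset (ℕ × ℕ) :=
  ↑((B.P.getD (B.P.length - 1) []).zip (B.Q.getD (B.Q.length - 1) []))

end Bitab

/-- `σ` represents a dual pair of chains in ℕ² : `σ` is a pair of skew-symmetric
lexicographic arrays whose first array lists a chain (first coordinates strictly
increasing, second coordinates strictly decreasing along the columns). -/
def IsChainArr (σ : ArrayPair) : Prop :=
  σ.SkewSymmLex ∧ List.Chain' (· < ·) σ.a ∧ List.Chain' (· > ·) σ.b

/-- `σ` represents a dual pair of chains in the pair of skew-symmetric multisets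
represented by `π` : both chains are contained in the respective underlying sets, and for
each column of the chain array, the dual column within `π` of its leftmost occurrence
coincides with its dual column within `σ`. -/
def DualChainIn (π σ : ArrayPair) : Prop :=
  IsChainArr σ ∧
  (∀ x ∈ σ.a.zip σ.b, x ∈ π.a.zip π.b) ∧
  (∀ x ∈ σ.d.zip σ.c, x ∈ π.d.zip π.c) ∧
  (∀ i < σ.t,
    (π.c.getD (π.t - 1 - (π.b.zip π.a).findIdx (fun x => x == (σ.b.getD i 0, σ.a.getD i 0))) 0,
     π.d.getD (π.t - 1 - (π.b.zip π.a).findIdx (fun x => x == (σ.b.getD i 0, σ.a.getD i 0))) 0)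
      = (σ.c.getD (σ.t - 1 - i) 0, σ.d.getD (σ.t - 1 - i) 0))

/-- The pair represented by `π` is bounded below by `T` : for every dual pair of chains in
it, `T ≤ OBRSK(negative part of the chain pair)^up`. -/
def PairBoundedT (π : ArrayPair) (T : Finset (ℕ × ℕ)) : Prop :=
  ∀ σ : ArrayPair, DualChainIn π σ → msLE ↑T.val (OBRSK σ.negPart).up

/-- The pair represented by `π` is bounded above by `W` : for every dual pair of chains in
it, `OBRSK(positive part of the chain pair)^down ≤ W`. -/
def PairBoundedW (π : ArrayPair) (W : Finset (ℕ × ℕ)) : Prop :=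
  ∀ σ : ArrayPair, DualChainIn π σ → msLE (OBRSK σ.posPart).down ↑W.val

/-- The pair represented by `π` is bounded by `T, W`. -/
def PairBounded (π : ArrayPair) (T W : Finset (ℕ × ℕ)) : Prop :=
  PairBoundedT π T ∧ PairBoundedW π W

namespace Bitab

/-- The bitableau is bounded below by `T` : if its top row is negative (i.e. the negative
part is nonempty), then `T₍₁₎ − T₍₂₎ ≤ P₁⁻ − Q₁⁻`. -/
def BoundedByT (B : Bitab) (T : Finset (ℕ × ℕ)) : Prop :=
  diffLT (B.P.getD 0 []) (B.Q.getD 0 []) [] [] →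
    msLE ↑T.val ↑((B.P.getD 0 []).zip (B.Q.getD 0 []))

/-- The bitableau is bounded above by `W` : if its bottom row is positive (i.e. the
positive part is nonempty), then `P⁺_s − Q⁺_s ≤ W₍₁₎ − W₍₂₎`. -/
def BoundedByW (B : Bitab) (W : Finset (ℕ × ℕ)) : Prop :=
  diffLT [] [] (B.P.getD (B.P.length - 1) []) (B.Q.getD (B.Q.length - 1) []) →
    msLE ↑((B.P.getD (B.P.length - 1) []).zip (B.Q.getD (B.Q.length - 1) [])) ↑W.val

/-- The bitableau is bounded by `T, W`. -/
def BoundedBy (B : Bitab) (T W : Finset (ℕ × ℕ)) : Prop :=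
  B.BoundedByT T ∧ B.BoundedByW W

end Bitab

/-- A negative subset of ℕ². -/
def NegSubset (T : Finset (ℕ × ℕ)) : Prop := ∀ p ∈ T, p.1 < p.2

/-- A positive subset of ℕ². -/
def PosSubset (W : Finset (ℕ × ℕ)) : Prop := ∀ p ∈ W, p.2 < p.1

/-- The coordinate projections `T₍₁₎`, `T₍₂₎` have no repeated elements. -/
def ProjNodup (T : Finset (ℕ × ℕ)) : Prop :=
  (T.val.map Prod.fst).Nodup ∧ (T.val.map Prod.snd).Nodup

/-! ### The orthogonal Grassmannian combinatorics -/

/-- `Ĩ(d)` : the set of `d`-element subsets of `{1, …, 2d}` containing exactly one of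
`k, k* = 2d+1−k` for every `k`, with an even number of elements exceeding `d`. -/
def Itilde (d : ℕ) : Set (Finset ℕ) :=
  {v | v ⊆ Finset.Icc 1 (2 * d) ∧ v.card = d ∧
    (∀ k ∈ Finset.Icc 1 (2 * d), (k ∈ v ↔ (2 * d + 1 - k) ∉ v)) ∧
    Even ((v.filter (fun x => d < x)).card)}

/-- `OR(β) = {(r,c) : r ∈ β̄, c ∈ β, r < c*}`. -/
def ORset (d : ℕ) (β : Finset ℕ) : Set (ℕ × ℕ) :=
  {p | p.1 ∈ Finset.Icc 1 (2 * d) ∧ p.1 ∉ β ∧ p.2 ∈ β ∧ p.1 < 2 * d + 1 - p.2}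

/-- `U^# := {(c*, r*) : (r,c) ∈ U}` (with multiplicities). -/
def hashMS (d : ℕ) (U : Multiset (ℕ × ℕ)) : Multiset (ℕ × ℕ) :=
  U.map (fun p => (2 * d + 1 - p.2, 2 * d + 1 - p.1))

/-- `ψ(π)` is a pair of skew-symmetric multisets on `β̄×β`, i.e. of the form `{U, U^#}`
with `U` a multiset on `OR(β)`. -/
def ArrayPair.OnBB (d : ℕ) (β : Finset ℕ) (π : ArrayPair) : Prop :=
  (∀ x ∈ π.a.zip π.b, x ∈ ORset d β) ∧
  (↑(π.d.zip π.c) : Multiset (ℕ × ℕ)) = hashMS d ↑(π.a.zip π.b)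

/-- A skew-symmetric notched bitableau is on `β̄×β` : all entries of `P` are in `β̄`, all
entries of `Q` are in `β`, and every entry plus its dual equals `2d+1`. -/
def Bitab.OnBB (d : ℕ) (β : Finset ℕ) (B : Bitab) : Prop :=
  (∀ r ∈ B.P, ∀ x ∈ r, x ∈ Finset.Icc 1 (2 * d) ∧ x ∉ β) ∧
  (∀ r ∈ B.Q, ∀ x ∈ r, x ∈ β) ∧
  (∀ p ∈ B.entryDual, p.1 + p.2 = 2 * d + 1)

/-- The partial order on `Ĩ(d)` : `v ≤ w` iff the `i`-th smallest element of `v` is `≤`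
the `i`-th smallest element of `w` for every `i`. -/
def IleD (v w : Finset ℕ) : Prop :=
  v.card = w.card ∧
  ∀ i < v.card, (v.sort (· ≤ ·)).getD i 0 ≤ (w.sort (· ≤ ·)).getD i 0

def IltD (v w : Finset ℕ) : Prop := IleD v w ∧ v ≠ w

/-- `I_β(Skew-symm)` : pairs `(R, S)` with `R ⊆ β̄`, `S ⊆ β`, `|R| = |S|` even, and
`r_i + s_{2l+1−i} = 2d+1` for all `i`. -/
def IbSS (d : ℕ) (β : Finset ℕ) : Set (Finset ℕ × Finset ℕ) :=
  {RS | RS.1 ⊆ Finset.Icc 1 (2 * d) \ β ∧ RS.2 ⊆ β ∧ RS.1.card = RS.2.card ∧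
    Even RS.1.card ∧
    ∀ i < RS.1.card,
      (RS.1.sort (· ≤ ·)).getD i 0 + (RS.2.sort (· ≤ ·)).getD (RS.1.card - 1 - i) 0
        = 2 * d + 1}

/-- `θ_i := P_i ∪̇ (β ∖ Q_i)`. -/
def rowTheta (β : Finset ℕ) (p q : List ℕ) : Finset ℕ := p.toFinset ∪ (β \ q.toFinset)

/-- An extended `β`-chain, listed with strictly increasing rows and strictly decreasing
columns. -/
def IsExtChain (ch : List (ℕ × ℕ)) : Prop :=
  List.Chain' (fun x y => x.1 < y.1 ∧ y.2 < x.2) ch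

/-- The negative part `C⁻` of an extended chain: the elements `(r,c)` with `r < c`. -/
def chainNeg (ch : List (ℕ × ℕ)) : List (ℕ × ℕ) := ch.filter (fun p => decide (p.1 < p.2))

/-- The positive part `C⁺` of an extended chain: the elements `(r,c)` with `r > c`. -/
def chainPos (ch : List (ℕ × ℕ)) : List (ℕ × ℕ) := ch.filter (fun p => decide (p.2 < p.1))

/-- `ψ⁻¹({C, C^#})` : the pair of arrays corresponding to the dual pair of chains
`{C, C^#}` determined by an extended `β`-chain `C`. -/
def chainToPair (d : ℕ) (ch : List (ℕ × ℕ)) : ArrayPair :=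
  ⟨ch.map Prod.fst, ch.map Prod.snd,
   (ch.map (fun p => 2 * d + 1 - p.1)).reverse,
   (ch.map (fun p => 2 * d + 1 - p.2)).reverse⟩

/-- The terminating row number `K` of the bounded insertion performed at step `i`
(1-indexed) of the OBRSK algorithm. -/
def stepK (π : ArrayPair) (i : ℕ) : ℕ :=
  ((insertP (π.quads.getD (i - 1) (0, 0, 0, 0)).2.1 (stepState π (i - 1)).1
      (π.quads.getD (i - 1) (0, 0, 0, 0)).1).2).length

end OBRSKPaper

open OBRSKPaper

/-! ### Auxiliary lemmas for stmt16 -/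

section Stmt16Aux

open OBRSKPaper

private lemma sorted_getD_le {row : List ℕ} (hs : row.Pairwise (· ≤ ·)) {i j : ℕ}
    (hij : i ≤ j) (hj : j < row.length) : row.getD i 0 ≤ row.getD j 0 := by
  rcases eq_or_lt_of_le hij with rfl | h
  · exact le_refl _
  · rw [List.getD_eq_getElem _ _ (lt_of_le_of_lt hij hj), List.getD_eq_getElem _ _ hj]
    exact List.pairwise_iff_getElem.mp hs i j _ _ h

private lemma findIdx?_some_spec {p : ℕ → Bool} {l : List ℕ} {j : ℕ}
    (h : l.findIdx? p = some j) :
    j < l.length ∧ p (l.getD j 0) = true ∧ ∀ i, i < j → p (l.getD i 0) = false := by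
  rw [List.findIdx?_eq_some_iff_findIdx_eq] at h
  obtain ⟨hj, hfi⟩ := h
  refine ⟨hj, ?_, ?_⟩
  · rw [List.getD_eq_getElem _ _ hj]
    subst hfi
    exact List.findIdx_getElem (w := hj)
  · intro i hij
    rw [List.getD_eq_getElem _ _ (lt_trans hij hj)]
    exact List.not_of_lt_findIdx (by omega)

private lemma findIdx?_some_le {p : ℕ → Bool} {l : List ℕ} {m : ℕ} (hm : m < l.length)
    (hp : p (l.getD m 0) = true) : ∃ j, l.findIdx? p = some j ∧ j ≤ m := by
  rw [List.getD_eq_getElem _ _ hm] at hp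
  have h1 : List.findIdx p l < l.length :=
    List.findIdx_lt_length.mpr ⟨l[m], List.getElem_mem _, hp⟩
  refine ⟨List.findIdx p l, List.findIdx?_eq_some_iff_findIdx_eq.mpr ⟨h1, rfl⟩, ?_⟩
  by_contra hlt
  push_neg at hlt
  have := List.not_of_lt_findIdx (xs := l) (i := m) hlt
  simp [this] at hp


private lemma insertP_cons_some {b x j : ℕ} {row : List ℕ} (rest : List (List ℕ))
    (h : row.findIdx? (fun y => decide (x ≤ y ∧ y < b)) = some j) :
    insertP b (row :: rest) x =
      ((row.set j x) :: (insertP b rest (row.getD j 0)).1,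
        (j+1) :: (insertP b rest (row.getD j 0)).2) := by
  rcases hI : insertP b rest (row.getD j 0) with ⟨rest1, js⟩
  simp only [insertP, insertRowP, h, hI]

private lemma insertP_cons_none {b x : ℕ} {row : List ℕ} (rest : List (List ℕ))
    (h : row.findIdx? (fun y => decide (x ≤ y ∧ y < b)) = none) :
    insertP b (row :: rest) x =
      (insertAt row ((row.takeWhile (fun y => decide (y < b))).length) x :: rest,
       [(row.takeWhile (fun y => decide (y < b))).length + 1]) := by
  simp only [insertP, insertRowP, h]

private lemma insertP_snd_ne_nil (b : ℕ) (rows : List (List ℕ)) (x : ℕ) :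
    (insertP b rows x).2 ≠ [] := by
  cases rows with
  | nil => simp [insertP]
  | cons row rest =>
    rcases h : row.findIdx? (fun y => decide (x ≤ y ∧ y < b)) with _ | j
    · rw [insertP_cons_none rest h]; simp
    · rw [insertP_cons_some rest h]; simp

private lemma modifyRow_zero_cons (r : List ℕ) (rs : List (List ℕ)) (f : List ℕ → List ℕ) :
    modifyRow (r :: rs) 0 f = f r :: rs := by
  simp [modifyRow]

private lemma modifyRow_succ_cons (r : List ℕ) (rs : List (List ℕ)) (k : ℕ)
    (f : List ℕ → List ℕ) : modifyRow (r :: rs) (k+1) f = r :: modifyRow rs k f := by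
  simp [modifyRow]
private lemma lemB (b : ℕ) : ∀ (rows : List (List ℕ)), (∀ r ∈ rows, r.Pairwise (· ≤ ·)) →
    ∀ x x' d, x' ≤ x → x < b →
    (insertP b rows x).2.length <
    (insertP b (modifyRow (insertP b rows x).1 ((insertP b rows x).2.length - 1)
        (fun r => r ++ [d])) x').2.length := by
  intro rows
  induction rows with
  | nil =>
    intro _ x x' d hx' hxb
    have h0 : insertP b ([] : List (List ℕ)) x = ([[x]], [1]) := by simp [insertP]
    rw [h0]
    simp only [List.length_cons, List.length_nil]
    rw [modifyRow_zero_cons]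
    have hfi : ([x] ++ [d]).findIdx? (fun y => decide (x' ≤ y ∧ y < b)) = some 0 := by
      have : (x :: [d]).findIdx? (fun y => decide (x' ≤ y ∧ y < b)) = some 0 := by
        rw [List.findIdx?_cons]
        simp [hx', hxb]
      simpa using this
    rw [insertP_cons_some _ hfi]
    simp [insertP]
  | cons row rest ih =>
    intro hs x x' d hx' hxb
    have hsrow : row.Pairwise (· ≤ ·) := hs row (by simp)
    have hsrest : ∀ r ∈ rest, r.Pairwise (· ≤ ·) := fun r hr => hs r (by simp [hr])
    rcases hfi : row.findIdx? (fun y => decide (x ≤ y ∧ y < b)) with _ | j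
    · -- no bump in first row: new box there; second insertion bumps x
      rw [insertP_cons_none rest hfi]
      simp only [List.length_cons, List.length_nil, Nat.add_sub_cancel]
      rw [modifyRow_zero_cons]
      set j0 := (row.takeWhile (fun y => decide (y < b))).length with hj0
      have hxmem : x ∈ insertAt row j0 x ++ [d] := by
        simp [insertAt]
      obtain ⟨m, hm, hxm⟩ := List.mem_iff_getElem.mp hxmem
      have hpx : (fun y => decide (x' ≤ y ∧ y < b)) ((insertAt row j0 x ++ [d]).getD m 0)
          = true := by
        rw [List.getD_eq_getElem _ _ hm, hxm]
        simp [hx', hxb]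
      obtain ⟨j', hj', _⟩ := findIdx?_some_le (p := fun y => decide (x' ≤ y ∧ y < b)) hm hpx
      rw [insertP_cons_some rest hj']
      have := insertP_snd_ne_nil b rest ((insertAt row j0 x ++ [d]).getD j' 0)
      simp only [List.length_cons, List.length_singleton]
      have hpos : 0 < (insertP b rest ((insertAt row j0 x ++ [d]).getD j' 0)).2.length :=
        List.length_pos_iff.mpr this
      omega
    · -- bump in first row
      obtain ⟨hjlen, hpj, hplt⟩ := findIdx?_some_spec hfi
      simp only [decide_eq_true_eq] at hpj
      set y := row.getD j 0 with hy
      rw [insertP_cons_some rest hfi, ← hy]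
      rcases hjs : (insertP b rest y).2 with _ | ⟨j1, js1⟩
      · exact absurd hjs (insertP_snd_ne_nil b rest y)
      simp only [List.length_cons, Nat.add_sub_cancel]
      rw [modifyRow_succ_cons]
      -- second insertion into row.set j x
      have hsetlen : j < (row.set j x).length := by simpa using hjlen
      have hpx : (fun z => decide (x' ≤ z ∧ z < b)) ((row.set j x).getD j 0) = true := by
        rw [List.getD_eq_getElem _ _ hsetlen, List.getElem_set]
        simp [hx', hxb.le, hxb]
      obtain ⟨j'', hj'', hj''le⟩ := findIdx?_some_le (p := fun z => decide (x' ≤ z ∧ z < b)) hsetlen hpx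
      rw [insertP_cons_some _ hj'']
      -- the newly bumped value is ≤ y
      have hylt : (row.set j x).getD j'' 0 ≤ y := by
        rcases eq_or_lt_of_le hj''le with rfl | hlt
        · rw [List.getD_eq_getElem _ _ hsetlen, List.getElem_set]
          simp only [if_pos rfl]
          exact hpj.1
        · have hj''row : j'' < row.length := lt_trans hlt hjlen
          rw [List.getD_eq_getElem _ _ (by simpa using hj''row), List.getElem_set,
            if_neg (by omega)]
          rw [hy, List.getD_eq_getElem _ _ hjlen]
          exact List.pairwise_iff_getElem.mp hsrow j'' j hj''row hjlen hlt
      have hIH := ih hsrest y ((row.set j x).getD j'' 0) d hylt hpj.2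
      rw [hjs] at hIH
      simp only [List.length_cons, Nat.add_sub_cancel] at hIH ⊢
      omega
private lemma sorted_set_bump {b x j : ℕ} {row : List ℕ} (hs : row.Pairwise (· ≤ ·))
    (hfi : row.findIdx? (fun y => decide (x ≤ y ∧ y < b)) = some j) :
    (row.set j x).Pairwise (· ≤ ·) := by
  obtain ⟨hjlen, hpj, hplt⟩ := findIdx?_some_spec hfi
  simp only [decide_eq_true_eq] at hpj
  rw [List.getD_eq_getElem _ _ hjlen] at hpj
  rw [List.pairwise_iff_getElem]
  intro i1 i2 h1 h2 h12
  simp only [List.length_set] at h1 h2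
  rw [List.getElem_set, List.getElem_set]
  have hmono : ∀ {u v : ℕ} (huv : u ≤ v) (hv : v < row.length), row[u]'(by omega) ≤ row[v]'hv := by
    intro u v huv hv
    rcases eq_or_lt_of_le huv with rfl | hlt
    · exact le_refl _
    · exact List.pairwise_iff_getElem.mp hs u v (by omega) hv hlt
  by_cases e1 : j = i1
  · subst e1
    rw [if_pos rfl, if_neg (by omega)]
    exact hpj.1.trans (hmono (le_of_lt h12) h2)
  · rw [if_neg e1]
    by_cases e2 : j = i2
    · subst e2
      rw [if_pos rfl]
      have hfail := hplt i1 h12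
      rw [List.getD_eq_getElem _ _ h1] at hfail
      simp only [decide_eq_false_iff_not, not_and, not_lt] at hfail
      have hib : row[i1] < b := lt_of_le_of_lt (hmono (le_of_lt h12) hjlen) hpj.2
      by_contra hxx
      push_neg at hxx
      exact absurd hib (not_lt.mpr (hfail (le_of_lt hxx)))
    · rw [if_neg e2]
      exact hmono (le_of_lt h12) h2

private lemma takeWhile_stop (q : ℕ → Bool) :
    ∀ (l : List ℕ), (l.takeWhile q).length < l.length →
      q (l.getD (l.takeWhile q).length 0) = false := by
  intro l
  induction l with
  | nil => simp
  | cons a l ih =>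
    by_cases hq : q a
    · simp only [List.takeWhile_cons, hq, if_true, List.length_cons, List.getD_cons_succ,
        add_lt_add_iff_right]
      exact ih
    · simp [List.takeWhile_cons, hq]

private lemma sorted_insertAt_none {b x : ℕ} {row : List ℕ} (hs : row.Pairwise (· ≤ ·))
    (hxb : x < b) (hnone : ∀ a ∈ row, ¬(x ≤ a ∧ a < b)) :
    (insertAt row ((row.takeWhile (fun y => decide (y < b))).length) x).Pairwise (· ≤ ·) := by
  set q : ℕ → Bool := fun y => decide (y < b) with hq
  set j0 := (row.takeWhile q).length with hj0
  have htake : row.take j0 = row.takeWhile q :=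
    ((List.prefix_iff_eq_take).mp (List.takeWhile_prefix q)).symm
  have hlt : ∀ a ∈ row.take j0, a < x := by
    intro a ha
    rw [htake] at ha
    have hab : a < b := by simpa [hq] using List.mem_takeWhile_imp ha
    have := hnone a (List.mem_of_mem_take (by rw [htake]; exact ha))
    omega
  have hge : ∀ e ∈ row.drop j0, x ≤ e := by
    intro e he
    obtain ⟨m, hm, hem⟩ := List.mem_iff_getElem.mp he
    have hj0len : j0 < row.length := by
      have : (row.drop j0).length = row.length - j0 := List.length_drop
      omega
    have hstop := takeWhile_stop q row (by omega)
    rw [List.getD_eq_getElem _ _ hj0len] at hstop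
    have hbe : b ≤ row[j0] := by
      simp only [hq, decide_eq_false_iff_not, not_lt] at hstop
      exact hstop
    have : row[j0] ≤ e := by
      rw [← hem, List.getElem_drop]
      rcases Nat.eq_zero_or_pos m with rfl | hm0
      · simp
      · exact List.pairwise_iff_getElem.mp hs j0 (j0 + m) hj0len (by rw [List.length_drop] at hm; omega) (by omega)
    omega
  rw [insertAt, List.pairwise_append]
  refine ⟨List.Pairwise.sublist (List.take_sublist _ _) hs, ?_, ?_⟩
  · rw [List.pairwise_cons]
    exact ⟨hge, List.Pairwise.sublist (List.drop_sublist _ _) hs⟩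
  · intro a ha e he
    rcases List.mem_cons.mp he with rfl | he'
    · exact le_of_lt (hlt a ha)
    · exact le_of_lt (lt_of_lt_of_le (hlt a ha) (hge e he'))

private lemma insertP_sorted_mem (b : ℕ) : ∀ rows, (∀ r ∈ rows, r.Pairwise (· ≤ ·)) →
    ∀ x, x < b →
    (∀ r ∈ (insertP b rows x).1, r.Pairwise (· ≤ ·)) ∧
    (∀ r ∈ (insertP b rows x).1, ∀ e ∈ r, (∃ r0 ∈ rows, e ∈ r0) ∨ e = x) := by
  intro rows
  induction rows with
  | nil =>
    intro _ x _
    constructor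
    · intro r hr
      simp only [insertP, List.mem_singleton] at hr
      subst hr; simp
    · intro r hr e he
      simp only [insertP, List.mem_singleton] at hr
      subst hr
      simp only [List.mem_singleton] at he
      exact Or.inr he
  | cons row rest ih =>
    intro hs x hxb
    have hsrow : row.Pairwise (· ≤ ·) := hs row (by simp)
    have hsrest : ∀ r ∈ rest, r.Pairwise (· ≤ ·) := fun r hr => hs r (by simp [hr])
    rcases hfi : row.findIdx? (fun y => decide (x ≤ y ∧ y < b)) with _ | j
    · rw [insertP_cons_none rest hfi]
      have hnone : ∀ a ∈ row, ¬(x ≤ a ∧ a < b) := by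
        intro a ha
        have := (List.findIdx?_eq_none_iff).mp hfi a ha
        simpa using this
      constructor
      · intro r hr
        rcases List.mem_cons.mp hr with rfl | hr'
        · exact sorted_insertAt_none hsrow hxb hnone
        · exact hsrest r hr'
      · intro r hr e he
        rcases List.mem_cons.mp hr with rfl | hr'
        · rw [insertAt] at he
          rcases List.mem_append.mp he with h1 | h2
          · exact Or.inl ⟨row, by simp, List.mem_of_mem_take h1⟩
          · rcases List.mem_cons.mp h2 with rfl | h3
            · exact Or.inr rfl
            · exact Or.inl ⟨row, by simp, List.mem_of_mem_drop h3⟩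
        · exact Or.inl ⟨r, by simp [hr'], he⟩
    · obtain ⟨hjlen, hpj, _⟩ := findIdx?_some_spec hfi
      simp only [decide_eq_true_eq] at hpj
      rw [insertP_cons_some rest hfi]
      have hymem : row.getD j 0 ∈ row := by
        rw [List.getD_eq_getElem _ _ hjlen]; exact List.getElem_mem _
      obtain ⟨ihs, ihm⟩ := ih hsrest (row.getD j 0) hpj.2
      constructor
      · intro r hr
        rcases List.mem_cons.mp hr with rfl | hr'
        · exact sorted_set_bump hsrow hfi
        · exact ihs r hr'
      · intro r hr e he
        rcases List.mem_cons.mp hr with rfl | hr'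
        · rcases List.mem_or_eq_of_mem_set he with h1 | h2
          · exact Or.inl ⟨row, by simp, h1⟩
          · exact Or.inr h2
        · rcases ihm r hr' e he with ⟨r0, hr0, her0⟩ | rfl
          · exact Or.inl ⟨r0, by simp [hr0], her0⟩
          · exact Or.inl ⟨row, by simp, hymem⟩

private lemma modifyRow_mem : ∀ (rows : List (List ℕ)) (k : ℕ) (f : List ℕ → List ℕ)
    (r : List ℕ), r ∈ modifyRow rows k f → r ∈ rows ∨ ∃ r0 ∈ rows, r = f r0 := by
  intro rows
  induction rows with
  | nil => intro k f r hr; simp [modifyRow] at hr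
  | cons a l ih =>
    intro k f r hr
    cases k with
    | zero =>
      rw [modifyRow_zero_cons] at hr
      rcases List.mem_cons.mp hr with rfl | hr'
      · exact Or.inr ⟨a, by simp, rfl⟩
      · exact Or.inl (by simp [hr'])
    | succ k =>
      rw [modifyRow_succ_cons] at hr
      rcases List.mem_cons.mp hr with rfl | hr'
      · exact Or.inl (by simp)
      · rcases ih k f r hr' with h1 | ⟨r0, hr0, rfl⟩
        · exact Or.inl (by simp [h1])
        · exact Or.inr ⟨r0, by simp [hr0], rfl⟩
private lemma zip_getD_mem {l1 l2 : List ℕ} {i : ℕ} (h1 : i < l1.length) (h2 : i < l2.length) :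
    (l1.getD i 0, l2.getD i 0) ∈ l1.zip l2 := by
  have hz : i < (l1.zip l2).length := by simp [List.length_zip]; omega
  have : (l1.zip l2)[i] = (l1.getD i 0, l2.getD i 0) := by
    rw [List.getElem_zip, List.getD_eq_getElem _ _ h1, List.getD_eq_getElem _ _ h2]
  rw [← this]
  exact List.getElem_mem _

private lemma getD_reverse {l : List ℕ} {m : ℕ} (h : m < l.length) :
    l.reverse.getD m 0 = l.getD (l.length - 1 - m) 0 := by
  rw [List.getD_eq_getElem _ _ (by simpa using h), List.getD_eq_getElem _ _ (by omega),
    List.getElem_reverse]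

private lemma antitone_of_adjacent {f : ℕ → ℕ} {n : ℕ} (h : ∀ k, k + 1 < n → f (k+1) ≤ f k) :
    ∀ i j, i ≤ j → j < n → f j ≤ f i := by
  intro i j hij hj
  induction j with
  | zero =>
    have : i = 0 := Nat.le_zero.mp hij
    subst this; exact le_refl _
  | succ j ihj =>
    rcases Nat.lt_or_ge i (j+1) with hlt | hge
    · exact (h j hj).trans (ihj (by omega) (by omega))
    · have : i = j + 1 := by omega
      subst this; exact le_refl _

private lemma quads_getD (π : ArrayPair) (h : π.eqLen) {i : ℕ} (hi : i < π.t) :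
    π.quads.getD i (0, 0, 0, 0) =
      (π.a.getD i 0, π.b.getD i 0, π.c.reverse.getD i 0, π.d.reverse.getD i 0) := by
  obtain ⟨ha, hc, hd⟩ := h
  have hb : π.b.length = π.t := rfl
  have hia : i < π.a.length := by rw [ha]; exact hi
  have hib : i < π.b.length := hi
  have hic : i < π.c.reverse.length := by rw [List.length_reverse, hc]; exact hi
  have hid : i < π.d.reverse.length := by rw [List.length_reverse, hd]; exact hi
  have hlq : i < π.quads.length := by
    simp only [ArrayPair.quads, List.length_zip, List.length_reverse, ha, hc, hd, hb,
      min_self]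
    exact hi
  rw [List.getD_eq_getElem _ _ hlq]
  show (π.a.zip (π.b.zip (π.c.reverse.zip π.d.reverse)))[i]'(by simpa [ArrayPair.quads] using hlq) = _
  rw [List.getElem_zip, List.getElem_zip, List.getElem_zip]
  rw [List.getD_eq_getElem _ _ hia, List.getD_eq_getElem _ _ hib,
    List.getD_eq_getElem _ _ hic, List.getD_eq_getElem _ _ hid]

private lemma stepState_zero (π : ArrayPair) : stepState π 0 = ([], []) := by
  simp [stepState]

private lemma stepState_succ (π : ArrayPair) (h : π.eqLen) {i : ℕ} (hi : i < π.t) :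
    stepState π (i + 1) = obrskStep (stepState π i) (π.quads.getD i (0, 0, 0, 0)) := by
  obtain ⟨ha, hc, hd⟩ := h
  have hb : π.b.length = π.t := rfl
  have hlq : i < π.quads.length := by
    simp only [ArrayPair.quads, List.length_zip, List.length_reverse, ha, hc, hd, hb,
      min_self]
    exact hi
  unfold stepState
  rw [List.take_succ, List.getElem?_eq_getElem hlq, List.foldl_append,
    List.getD_eq_getElem _ _ hlq]
  rfl

private lemma obrskStep_fst (PQ : List (List ℕ) × List (List ℕ)) (x b c d : ℕ) :
    (obrskStep PQ (x, b, c, d)).1 =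
      modifyRow (insertP b PQ.1 x).1 ((insertP b PQ.1 x).2.length - 1)
        (fun r => r ++ [d]) := rfl
private lemma hab_getD (π : ArrayPair) (heq : π.eqLen) (hneg : π.Negative) {i : ℕ}
    (hi : i < π.t) : π.a.getD i 0 < π.b.getD i 0 :=
  hneg _ (zip_getD_mem (by rw [heq.1]; exact hi) hi)

private lemma had_getD (π : ArrayPair) (hlex : π.SkewSymmLex) {i : ℕ} (hi : i < π.t) :
    π.a.getD i 0 < π.d.reverse.getD i 0 := by
  obtain ⟨⟨ha, hc, hd⟩, -, -, -, had, -⟩ := hlex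
  exact had _ (zip_getD_mem (by rw [ha]; exact hi) (by rw [List.length_reverse, hd]; exact hi))

private lemma drev_mono (π : ArrayPair) (hlex : π.SkewSymmLex) :
    ∀ i j, i ≤ j → j < π.t → π.d.reverse.getD i 0 ≤ π.d.reverse.getD j 0 := by
  obtain ⟨⟨ha, hc, hd⟩, -, -, hdc, -⟩ := hlex
  have hanti := antitone_of_adjacent (f := fun k => π.d.getD k 0) (n := π.d.length)
    (fun k hk => (hdc k hk).1)
  intro i j hij hj
  have hi : i < π.t := lt_of_le_of_lt hij hj
  rw [getD_reverse (by rw [hd]; exact hi), getD_reverse (by rw [hd]; exact hj)]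
  exact hanti _ _ (by omega) (by rw [hd]; omega)

private lemma stepState_inv (π : ArrayPair) (hlex : π.SkewSymmLex) (hneg : π.Negative) :
    ∀ i, i ≤ π.t →
      (∀ r ∈ (stepState π i).1, r.Pairwise (· ≤ ·)) ∧
      (∀ r ∈ (stepState π i).1, ∀ e ∈ r, ∀ j, i ≤ j → j < π.t →
        e ≤ π.d.reverse.getD j 0) := by
  intro i
  induction i with
  | zero =>
    intro _
    rw [stepState_zero]
    constructor <;> intro r hr <;> simp at hr
  | succ i ihi =>
    intro hi1
    have hi : i < π.t := by omega
    obtain ⟨IHs, IHm⟩ := ihi (by omega)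
    have heq := hlex.1
    rw [stepState_succ π heq hi, quads_getD π heq hi, obrskStep_fst]
    have hxb := hab_getD π heq hneg hi
    obtain ⟨hPs, hPm⟩ := insertP_sorted_mem (π.b.getD i 0) (stepState π i).1 IHs
      (π.a.getD i 0) hxb
    have hbound : ∀ r ∈ (insertP (π.b.getD i 0) (stepState π i).1 (π.a.getD i 0)).1,
        ∀ e ∈ r, e ≤ π.d.reverse.getD i 0 := by
      intro r hr e he
      rcases hPm r hr e he with ⟨r0, hr0, her0⟩ | rfl
      · exact IHm r0 hr0 e her0 i (le_refl i) hi
      · exact le_of_lt (had_getD π hlex hi)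
    constructor
    · intro r hr
      rcases modifyRow_mem _ _ _ r hr with h1 | ⟨r0, hr0, rfl⟩
      · exact hPs r h1
      · rw [List.pairwise_append]
        refine ⟨hPs r0 hr0, by simp, ?_⟩
        intro u hu v hv
        rcases List.mem_singleton.mp hv with rfl
        exact hbound r0 hr0 u hu
    · intro r hr e he j hj1 hj2
      have hdij : π.d.reverse.getD i 0 ≤ π.d.reverse.getD j 0 :=
        drev_mono π hlex i j (by omega) hj2
      rcases modifyRow_mem _ _ _ r hr with h1 | ⟨r0, hr0, rfl⟩
      · exact le_trans (hbound r h1 e he) hdij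
      · rcases List.mem_append.mp he with h1 | h2
        · exact le_trans (hbound r0 hr0 e h1) hdij
        · rcases List.mem_singleton.mp h2 with rfl
          exact hdij

private lemma stepK_lt (π : ArrayPair) (hlex : π.SkewSymmLex) (hneg : π.Negative)
    {k : ℕ} (hk1 : 1 ≤ k) (hkt : k + 1 ≤ π.t)
    (hbk : π.b.getD (k - 1) 0 = π.b.getD k 0) : stepK π k < stepK π (k + 1) := by
  obtain ⟨i, rfl⟩ : ∃ i, k = i + 1 := ⟨k - 1, by omega⟩
  have hi : i < π.t := by omega
  have hi1 : i + 1 < π.t := by omega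
  have heq := hlex.1
  have hba := hlex.2.2.1
  have hb' : π.b.getD (i + 1) 0 = π.b.getD i 0 := by
    have := hbk.symm
    simpa using this
  have hax : π.a.getD (i + 1) 0 ≤ π.a.getD i 0 := (hba i hi1).2 hb'
  have hsorted := (stepState_inv π hlex hneg i (by omega)).1
  have hxb := hab_getD π heq hneg hi
  unfold stepK
  simp only [Nat.add_sub_cancel]
  rw [stepState_succ π heq hi, quads_getD π heq hi, quads_getD π heq hi1, obrskStep_fst,
    hb']
  exact lemB (π.b.getD i 0) (stepState π i).1 hsorted (π.a.getD i 0) (π.a.getD (i+1) 0)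
    (π.d.reverse.getD i 0) hax hxb

end Stmt16Aux

/-- For a pair of negative skew-symmetric lexicographic arrays, if
`l < l'` and `b_l = b_{l'}`, then the (top-to-bottom) number of the row in which
`d_{t+1−l'}` was placed at step `l'` of the OBRSK algorithm is strictly greater than the
number of the row in which `d_{t+1−l}` was placed at step `l`. -/
theorem stmt16 (π : ArrayPair) (hlex : π.SkewSymmLex) (hneg : π.Negative)
    (l l' : ℕ) (hl1 : 1 ≤ l) (hll' : l < l') (hl'2 : l' ≤ π.t)
    (hb : π.b.getD (l - 1) 0 = π.b.getD (l' - 1) 0) :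
    stepK π l < stepK π l' := by
  have hbmono : ∀ i j, i ≤ j → j < π.t → π.b.getD j 0 ≤ π.b.getD i 0 :=
    antitone_of_adjacent (f := fun k => π.b.getD k 0) (n := π.t)
      (fun k hk => (hlex.2.2.1 k hk).1)
  have hbconst : ∀ i, l - 1 ≤ i → i ≤ l' - 1 → π.b.getD i 0 = π.b.getD (l - 1) 0 := by
    intro i h1 h2
    have h3 : π.b.getD i 0 ≤ π.b.getD (l - 1) 0 := hbmono _ _ h1 (by omega)
    have h4 : π.b.getD (l' - 1) 0 ≤ π.b.getD i 0 := hbmono _ _ h2 (by omega)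
    omega
  have hstep : ∀ k, l ≤ k → k + 1 ≤ l' → stepK π k < stepK π (k + 1) := by
    intro k hk1 hk2
    apply stepK_lt π hlex hneg (by omega) (by omega)
    rw [hbconst (k - 1) (by omega) (by omega), hbconst k (by omega) (by omega)]
  have main : ∀ m, l + m + 1 ≤ l' → stepK π l < stepK π (l + m + 1) := by
    intro m
    induction m with
    | zero => intro h; exact hstep l (le_refl l) (by omega)
    | succ m ihm =>
      intro h
      have h1 := ihm (by omega)
      have h2 := hstep (l + m + 1) (by omega) (by omega)
      exact lt_trans h1 h2
  obtain ⟨m, hm⟩ : ∃ m, l' = l + m + 1 := ⟨l' - l - 1, by omega⟩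
  rw [hm]
  exact main m (by omega)
end

section
/- Let d be a positive integer and let α ≤ β ≤ γ be elements of Ĩ(d). Set (R_α,S_α) := (α∖β, β∖α) and (R_γ,S_γ) := (γ∖β, β∖γ), and let T_α and W_γ be subsets of β̄×β whose multisets of first coordinates are R_α and R_γ and whose multisets of second coordinates are S_α and S_γ respectively. Then for every positive integer m, the map sending a nonvanishing skew-symmetric notched bitableau (P,Q) on β̄×β with rows (P_1,Q_1),…,(P_r,Q_r) to the sequence (θ_1,…,θ_r) with θ_i := P_i ∪̇ (β ∖ Q_i) is a bijection from the set of all degree-2m nonvanishing skew-symmetric notched bitableaux on β̄×β bounded by T_α, W_γ onto the set of all sequences θ_1 ≤ ⋯ ≤ θ_r of elements of Ĩ(d) such that for each i either θ_i < β or θ_i > β, α ≤ θ_1, θ_r ≤ γ, and the β-degrees of θ_1,…,θ_r sum to m (the β-degree of τ ∈ Ĩ(d) being one half of |β∖τ|). -/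
open OBRSKPaper

theorem Finset.sort_sorted_lt (s : Finset ℕ) : (s.sort (· ≤ ·)).Pairwise (· < ·) :=
  ((Finset.pairwise_sort s _).and (Finset.sort_nodup s _)).imp fun h => lt_of_le_of_ne h.1 h.2

namespace Aux

/-- count of elements ≤ z in a finset -/
def fcnt (v : Finset ℕ) (z : ℕ) : ℕ := (v.filter (fun x => x ≤ z)).card

lemma cnt_nodup (l : List ℕ) (hl : l.Nodup) (z : ℕ) :
    (l.filter (fun x => decide (x ≤ z))).length = fcnt l.toFinset z := by
  classical
  have h1 : (l.toFinset.filter (fun x => x ≤ z)).val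
      = Multiset.filter (fun x => x ≤ z) (l : Multiset ℕ) := by
    rw [Finset.filter_val]
    congr 1
    exact Multiset.dedup_eq_self.mpr (Multiset.coe_nodup.mpr hl)
  have : fcnt l.toFinset z = Multiset.card (Multiset.filter (fun x => x ≤ z) (l : Multiset ℕ)) := by
    rw [fcnt, Finset.card_def, h1]
  rw [this]
  simp [Multiset.filter_coe]

lemma cnt_sort (v : Finset ℕ) (z : ℕ) :
    ((v.sort (· ≤ ·)).filter (fun x => decide (x ≤ z))).length = fcnt v z := by
  rw [cnt_nodup _ (v.sort_nodup _) z, Finset.sort_toFinset]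

/-- pointwise domination gives count domination -/
lemma count_of_pointwise (z : ℕ) : ∀ (a b : List ℕ), a.length = b.length →
    (∀ i < a.length, a.getD i 0 ≤ b.getD i 0) →
    (b.filter (fun x => decide (x ≤ z))).length ≤ (a.filter (fun x => decide (x ≤ z))).length := by
  intro a
  induction a with
  | nil => intro b hb _; rw [List.length_nil] at hb; rw [(List.length_eq_zero_iff).mp hb.symm]
  | cons x t ih =>
    intro b hb hp
    match b with
    | [] => simp at hb
    | y :: s =>
      have hxy : x ≤ y := by have := hp 0 (by simp); simpa using this
      have hlen : t.length = s.length := by simpa using hb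
      have hrec := ih s hlen (fun i hi => by
        have := hp (i+1) (by simpa using Nat.succ_lt_succ hi)
        simpa using this)
      by_cases hy : y ≤ z
      · have hx : x ≤ z := le_trans hxy hy
        simp only [List.filter_cons, hx, hy]
        simp only [decide_eq_true_eq] at *
        simp [hx, hy]
        omega
      · by_cases hx : x ≤ z
        · simp [List.filter_cons, hx, hy]; omega
        · simp [List.filter_cons, hx, hy]; omega

/-- for a weakly sorted list, count of ≤ z is at least i+1 if the i-th entry is ≤ z -/
lemma count_ge_of_sorted (z : ℕ) : ∀ (a : List ℕ), a.Pairwise (· ≤ ·) →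
    ∀ i < a.length, a.getD i 0 ≤ z →
    i + 1 ≤ (a.filter (fun x => decide (x ≤ z))).length := by
  intro a
  induction a with
  | nil => intro _ i hi; simp at hi
  | cons x t ih =>
    intro hs i hi hz
    match i with
    | 0 =>
      have hx : x ≤ z := by simpa using hz
      simp [List.filter_cons, hx]
    | j + 1 =>
      have hj : j < t.length := by simpa using hi
      have hz' : t.getD j 0 ≤ z := by simpa using hz
      have hrec := ih hs.of_cons j hj hz'
      have hx : x ≤ z := by
        have hmem : t.getD j 0 ∈ t := by
          rw [List.getD_eq_getElem t 0 hj]; exact List.getElem_mem hj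
        have := (List.pairwise_cons.mp hs).1 _ hmem
        omega
      simp [List.filter_cons, hx]
      omega

/-- for a weakly sorted list, count of ≤ z is at most i if the i-th entry is > z -/
lemma count_le_of_sorted (z : ℕ) : ∀ (a : List ℕ), a.Pairwise (· ≤ ·) →
    ∀ i < a.length, z < a.getD i 0 →
    (a.filter (fun x => decide (x ≤ z))).length ≤ i := by
  intro a
  induction a with
  | nil => intro _ i hi; simp at hi
  | cons x t ih =>
    intro hs i hi hz
    match i with
    | 0 =>
      have hx : z < x := by simpa using hz
      have : ∀ y ∈ x :: t, ¬ (y ≤ z) := by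
        intro y hy
        rcases List.mem_cons.mp hy with h | h
        · omega
        · have := (List.pairwise_cons.mp hs).1 _ h; omega
      have : (x :: t).filter (fun x => decide (x ≤ z)) = [] := by
        apply List.filter_eq_nil_iff.mpr
        intro y hy; simpa using this y hy
      simp [this]
    | j + 1 =>
      have hj : j < t.length := by simpa using hi
      have hz' : z < t.getD j 0 := by simpa using hz
      have hrec := ih hs.of_cons j hj hz'
      by_cases hx : x ≤ z
      · simp [List.filter_cons, hx]; omega
      · simp [List.filter_cons, hx]; omega

end Aux
namespace Aux
open OBRSKPaper

lemma sort_getD_mono {v : Finset ℕ} {i j : ℕ} (hij : i ≤ j) (hj : j < v.card) :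
    (v.sort (· ≤ ·)).getD i 0 ≤ (v.sort (· ≤ ·)).getD j 0 := by
  have hlen : (v.sort (· ≤ ·)).length = v.card := Finset.length_sort _
  rcases eq_or_lt_of_le hij with rfl | hlt
  · exact le_rfl
  · rw [List.getD_eq_getElem _ 0 (by omega), List.getD_eq_getElem _ 0 (by omega)]
    exact le_of_lt (List.Pairwise.rel_get_of_lt (Finset.sort_sorted_lt v) (by simpa using hlt))

lemma ileD_iff_fcnt {v w : Finset ℕ} (hc : v.card = w.card) :
    IleD v w ↔ ∀ z, fcnt w z ≤ fcnt v z := by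
  constructor
  · intro h z
    rw [← cnt_sort, ← cnt_sort]
    apply count_of_pointwise
    · simp [hc]
    · intro i hi
      exact h.2 i (by rwa [Finset.length_sort] at hi)
  · intro h
    refine ⟨hc, ?_⟩
    intro i hi
    by_contra hlt
    push_neg at hlt
    set z := (w.sort (· ≤ ·)).getD i 0 with hz
    have h1 : i + 1 ≤ ((w.sort (· ≤ ·)).filter (fun x => decide (x ≤ z))).length :=
      count_ge_of_sorted z _ (Finset.pairwise_sort _ _) i (by rw [Finset.length_sort]; omega) le_rfl
    have h2 : ((v.sort (· ≤ ·)).filter (fun x => decide (x ≤ z))).length ≤ i :=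
      count_le_of_sorted z _ (Finset.pairwise_sort _ _) i (by rw [Finset.length_sort]; exact hi) hlt
    have h3 := h z
    rw [← cnt_sort, ← cnt_sort] at h3
    omega

lemma ileD_refl (v : Finset ℕ) : IleD v v := ⟨rfl, fun _ _ => le_rfl⟩

lemma ileD_trans {u v w : Finset ℕ} (h1 : IleD u v) (h2 : IleD v w) : IleD u w :=
  ⟨h1.1.trans h2.1, fun i hi => le_trans (h1.2 i hi) (h2.2 i (h1.1 ▸ hi))⟩

lemma ileD_antisymm {v w : Finset ℕ} (h1 : IleD v w) (h2 : IleD w v) : v = w := by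
  have hsort : v.sort (· ≤ ·) = w.sort (· ≤ ·) := by
    apply List.ext_getElem (by simp [h1.1])
    intro i hi1 hi2
    have hiv : i < v.card := by rwa [Finset.length_sort] at hi1
    have e1 := h1.2 i hiv
    have e2 := h2.2 i (h1.1 ▸ hiv)
    rw [List.getD_eq_getElem _ 0 hi1, List.getD_eq_getElem _ 0 hi2] at e1 e2
    omega
  have : (v.sort (· ≤ ·)).toFinset = (w.sort (· ≤ ·)).toFinset := by rw [hsort]
  rwa [Finset.sort_toFinset, Finset.sort_toFinset] at this

lemma iltD_iff {v w : Finset ℕ} (h1 : IleD v w) : v ≠ w ↔ ¬ IleD w v := by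
  constructor
  · intro hne h2; exact hne (ileD_antisymm h1 h2)
  · intro h2 he; exact h2 (he ▸ ileD_refl v)

lemma fcnt_split (θ β : Finset ℕ) (z : ℕ) :
    fcnt θ z = fcnt (θ \ β) z + fcnt (θ ∩ β) z := by
  classical
  have hd : Disjoint ((θ \ β).filter (fun x => x ≤ z)) ((θ ∩ β).filter (fun x => x ≤ z)) :=
    Finset.disjoint_filter_filter ((Finset.sdiff_disjoint).mono_right Finset.inter_subset_right)
  rw [fcnt, fcnt, fcnt, ← Finset.card_union_of_disjoint hd, ← Finset.filter_union,
    Finset.sdiff_union_inter]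

lemma fcnt_diff_eq (θ β : Finset ℕ) (z : ℕ) :
    (fcnt (θ \ β) z : ℤ) - fcnt (β \ θ) z = (fcnt θ z : ℤ) - fcnt β z := by
  have h1 := fcnt_split θ β z
  have h2 := fcnt_split β θ z
  rw [Finset.inter_comm] at h2
  omega

end Aux
namespace Aux
open OBRSKPaper

/-- All the properties of a single row of a bitableau in the domain. -/
def RowOK (d : ℕ) (β : Finset ℕ) (p q : List ℕ) : Prop :=
  p.Pairwise (· < ·) ∧ q.Pairwise (· < ·) ∧ p.length = q.length ∧
  (∀ x ∈ p, x ∈ Finset.Icc 1 (2 * d) ∧ x ∉ β) ∧ (∀ x ∈ q, x ∈ β) ∧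
  (∀ x ∈ p, 2 * d + 1 - x ∈ q) ∧ (∀ y ∈ q, 2 * d + 1 - y ∈ p)

variable {d : ℕ} {β : Finset ℕ} {p q : List ℕ}

lemma RowOK.pset (h : RowOK d β p q) : (rowTheta β p q) \ β = p.toFinset := by
  ext x
  simp only [rowTheta, Finset.mem_sdiff, Finset.mem_union, List.mem_toFinset]
  constructor
  · rintro ⟨h1 | ⟨h1, _⟩, h2⟩
    · exact h1
    · exact absurd h1 h2
  · intro hx
    exact ⟨Or.inl hx, (h.2.2.2.1 x hx).2⟩

lemma RowOK.qset (h : RowOK d β p q) : β \ (rowTheta β p q) = q.toFinset := by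
  ext x
  simp only [rowTheta, Finset.mem_sdiff, Finset.mem_union, List.mem_toFinset]
  constructor
  · rintro ⟨hxβ, hn⟩
    by_contra hxq
    exact hn (Or.inr ⟨hxβ, hxq⟩)
  · intro hxq
    refine ⟨h.2.2.2.2.1 x hxq, ?_⟩
    rintro (hxp | ⟨hxβ, hxnq⟩)
    · exact (h.2.2.2.1 x hxp).2 (h.2.2.2.2.1 x hxq)
    · exact hxnq hxq

lemma RowOK.qsub (h : RowOK d β p q) : q.toFinset ⊆ β := by
  intro x hx; exact h.2.2.2.2.1 x (List.mem_toFinset.mp hx)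

lemma RowOK.pdisj (h : RowOK d β p q) : Disjoint p.toFinset (β \ q.toFinset) := by
  rw [Finset.disjoint_left]
  intro x hx hx2
  exact (h.2.2.2.1 x (List.mem_toFinset.mp hx)).2 (Finset.mem_sdiff.mp hx2).1

lemma RowOK.card_theta (h : RowOK d β p q) (hβc : β.card = d) :
    (rowTheta β p q).card = d := by
  have hnp : p.Nodup := h.1.nodup
  have hnq : q.Nodup := h.2.1.nodup
  have hql : q.toFinset.card ≤ d := hβc ▸ Finset.card_le_card h.qsub
  rw [rowTheta, Finset.card_union_of_disjoint h.pdisj, Finset.card_sdiff_of_subset h.qsub,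
    List.toFinset_card_of_nodup hnp, List.toFinset_card_of_nodup hnq] at *
  have := h.2.2.1
  omega

lemma RowOK.theta_subset (h : RowOK d β p q) (hβI : β ⊆ Finset.Icc 1 (2 * d)) :
    rowTheta β p q ⊆ Finset.Icc 1 (2 * d) := by
  intro x hx
  rcases Finset.mem_union.mp hx with hx | hx
  · exact (h.2.2.2.1 x (List.mem_toFinset.mp hx)).1
  · exact hβI (Finset.mem_sdiff.mp hx).1

lemma RowOK.theta_iff (h : RowOK d β p q) (hβ : β ∈ Itilde d) :
    ∀ k ∈ Finset.Icc 1 (2 * d),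
      (k ∈ rowTheta β p q ↔ (2 * d + 1 - k) ∉ rowTheta β p q) := by
  obtain ⟨hβI, hβc, hβiff, hβev⟩ := hβ
  have hp := h.2.2.2.1
  have hq := h.2.2.2.2.1
  have hpq := h.2.2.2.2.2.1
  have hqp := h.2.2.2.2.2.2
  intro k hk
  have hkIcc : 1 ≤ k ∧ k ≤ 2 * d := Finset.mem_Icc.mp hk
  have hkk : 2 * d + 1 - (2 * d + 1 - k) = k := by omega
  have hβk := hβiff k hk
  simp only [rowTheta, Finset.mem_union, Finset.mem_sdiff, List.mem_toFinset]
  by_cases hkβ : k ∈ β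
  · have hknp : k ∉ p := fun hh => (hp k hh).2 hkβ
    have hksβ : 2 * d + 1 - k ∉ β := hβk.mp hkβ
    constructor
    · rintro (hkp | ⟨_, hknq⟩)
      · exact absurd hkp hknp
      · rintro (hsp | ⟨hsβ, _⟩)
        · have := hpq _ hsp
          rw [hkk] at this
          exact hknq this
        · exact hksβ hsβ
    · intro hns
      right
      refine ⟨hkβ, fun hkq => hns (Or.inl (hqp _ hkq))⟩
  · have hsβ : 2 * d + 1 - k ∈ β := by
      by_contra hns
      exact hkβ (hβk.mpr hns)
    have hsnp : 2 * d + 1 - k ∉ p := fun hh => (hp _ hh).2 hsβ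
    constructor
    · rintro (hkp | ⟨hkβ', _⟩)
      · rintro (hsp | ⟨_, hsnq⟩)
        · exact hsnp hsp
        · exact hsnq (hpq _ hkp)
      · exact absurd hkβ' hkβ
    · intro hns
      left
      by_cases hsq : 2 * d + 1 - k ∈ q
      · have := hqp _ hsq
        rwa [hkk] at this
      · exact absurd (Or.inr ⟨hsβ, hsq⟩) hns

lemma RowOK.theta_even (h : RowOK d β p q) (hβ : β ∈ Itilde d) (heven : Even p.length) :
    Even (((rowTheta β p q).filter (fun x => d < x)).card) := by
  classical
  obtain ⟨hβI, hβc, hβiff, hβev⟩ := hβ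
  have hp := h.2.2.2.1
  have hq := h.2.2.2.2.1
  have hpq := h.2.2.2.2.2.1
  have hqp := h.2.2.2.2.2.2
  set pf := p.toFinset with hpf
  set qf := q.toFinset with hqf
  -- split θ filter
  have e1 : ((rowTheta β p q).filter (fun x => d < x)).card
      = (pf.filter (fun x => d < x)).card + ((β \ qf).filter (fun x => d < x)).card := by
    rw [rowTheta, Finset.filter_union,
      Finset.card_union_of_disjoint (Finset.disjoint_filter_filter h.pdisj)]
  -- bijection between pf.filter (d < ·) and qf.filter (¬ d < ·)
  have e2 : (pf.filter (fun x => d < x)).card = (qf.filter (fun x => ¬ d < x)).card := by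
    apply Finset.card_bij (fun x _ => 2 * d + 1 - x)
    · intro x hx
      obtain ⟨hxp, hxd⟩ := Finset.mem_filter.mp hx
      have hxI := (hp x (List.mem_toFinset.mp hxp)).1
      rw [Finset.mem_Icc] at hxI
      refine Finset.mem_filter.mpr ⟨List.mem_toFinset.mpr (hpq x (List.mem_toFinset.mp hxp)), by omega⟩
    · intro x hx y hy hxy
      obtain ⟨hxp, hxd⟩ := Finset.mem_filter.mp hx
      obtain ⟨hyp, hyd⟩ := Finset.mem_filter.mp hy
      have hxI := (hp x (List.mem_toFinset.mp hxp)).1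
      have hyI := (hp y (List.mem_toFinset.mp hyp)).1
      rw [Finset.mem_Icc] at hxI hyI
      omega
    · intro y hy
      obtain ⟨hyq, hyd⟩ := Finset.mem_filter.mp hy
      have hyβ := hq y (List.mem_toFinset.mp hyq)
      have hyI := Finset.mem_Icc.mp (hβI hyβ)
      refine ⟨2 * d + 1 - y, Finset.mem_filter.mpr ⟨List.mem_toFinset.mpr (hqp y (List.mem_toFinset.mp hyq)), by omega⟩, by omega⟩
  -- (β \ qf) filter + qf filter = β filter
  have e3 : ((β \ qf).filter (fun x => d < x)).card + (qf.filter (fun x => d < x)).card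
      = (β.filter (fun x => d < x)).card := by
    conv_rhs => rw [← Finset.sdiff_union_of_subset h.qsub]
    rw [Finset.filter_union,
      Finset.card_union_of_disjoint (Finset.disjoint_filter_filter Finset.sdiff_disjoint)]
  have e4 : (qf.filter (fun x => ¬ d < x)).card + (qf.filter (fun x => d < x)).card = qf.card := by
    rw [add_comm]
    exact Finset.card_filter_add_card_filter_not _
  have e5 : qf.card = p.length := by
    rw [hqf, List.toFinset_card_of_nodup h.2.1.nodup, ← h.2.2.1]
  rw [Nat.even_iff] at *
  omega

lemma RowOK.theta_mem (h : RowOK d β p q) (hβ : β ∈ Itilde d) (heven : Even p.length) :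
    rowTheta β p q ∈ Itilde d :=
  ⟨h.theta_subset hβ.1, h.card_theta hβ.2.1, h.theta_iff hβ, h.theta_even hβ heven⟩

lemma RowOK.cnt (h : RowOK d β p q) (z : ℕ) :
    cntLE p z - cntLE q z = (fcnt (rowTheta β p q) z : ℤ) - fcnt β z := by
  have e1 : cntLE p z = (fcnt ((rowTheta β p q) \ β) z : ℤ) := by
    rw [cntLE, cnt_nodup p h.1.nodup z, h.pset]
  have e2 : cntLE q z = (fcnt (β \ (rowTheta β p q)) z : ℤ) := by
    rw [cntLE, cnt_nodup q h.2.1.nodup z, h.qset]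
  rw [e1, e2, fcnt_diff_eq]

end Aux
namespace Aux
open OBRSKPaper

variable {d : ℕ} {β A : Finset ℕ} {p q p' q' : List ℕ}

lemma cntLE_nil (z : ℕ) : cntLE [] z = 0 := by simp [cntLE]

lemma diffLE_iff (hβ : β ∈ Itilde d) (h : RowOK d β p q) (h' : RowOK d β p' q') :
    diffLE p q p' q' ↔ IleD (rowTheta β p q) (rowTheta β p' q') := by
  rw [ileD_iff_fcnt (by rw [h.card_theta hβ.2.1, h'.card_theta hβ.2.1])]
  unfold diffLE
  constructor
  · intro hh z
    have := hh z
    rw [h.cnt z, h'.cnt z] at this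
    omega
  · intro hh z
    have := hh z
    rw [h.cnt z, h'.cnt z]
    omega

lemma diffLE_nil_right_iff (hβ : β ∈ Itilde d) (h : RowOK d β p q) :
    diffLE p q [] [] ↔ IleD (rowTheta β p q) β := by
  rw [ileD_iff_fcnt (by rw [h.card_theta hβ.2.1, hβ.2.1])]
  unfold diffLE
  constructor
  · intro hh z
    have := hh z
    rw [h.cnt z, cntLE_nil] at this
    omega
  · intro hh z
    have := hh z
    rw [h.cnt z, cntLE_nil]
    omega

lemma diffLE_nil_left_iff (hβ : β ∈ Itilde d) (h : RowOK d β p q) :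
    diffLE [] [] p q ↔ IleD β (rowTheta β p q) := by
  rw [ileD_iff_fcnt (by rw [h.card_theta hβ.2.1, hβ.2.1])]
  unfold diffLE
  constructor
  · intro hh z
    have := hh z
    rw [h.cnt z, cntLE_nil] at this
    omega
  · intro hh z
    have := hh z
    rw [h.cnt z, cntLE_nil]
    omega

lemma diffLT_neg_iff (hβ : β ∈ Itilde d) (h : RowOK d β p q) :
    diffLT p q [] [] ↔ IltD (rowTheta β p q) β := by
  unfold diffLT IltD
  rw [diffLE_nil_right_iff hβ h, diffLE_nil_left_iff hβ h]
  constructor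
  · rintro ⟨h1, h2⟩
    exact ⟨h1, (iltD_iff h1).mpr h2⟩
  · rintro ⟨h1, h2⟩
    exact ⟨h1, (iltD_iff h1).mp h2⟩

lemma diffLT_pos_iff (hβ : β ∈ Itilde d) (h : RowOK d β p q) :
    diffLT [] [] p q ↔ IltD β (rowTheta β p q) := by
  unfold diffLT IltD
  rw [diffLE_nil_right_iff hβ h, diffLE_nil_left_iff hβ h]
  constructor
  · rintro ⟨h1, h2⟩
    exact ⟨h1, (iltD_iff h1).mpr h2⟩
  · rintro ⟨h1, h2⟩
    exact ⟨h1, (iltD_iff h1).mp h2⟩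

lemma diffLT_nil_nil_false : ¬ diffLT ([] : List ℕ) [] [] [] := fun h => h.2 h.1

lemma zip_filter_fst (f : ℕ → Bool) : ∀ (a b : List ℕ), a.length = b.length →
    ((a.zip b).filter (fun p => f p.1)).length = (a.filter f).length := by
  intro a
  induction a with
  | nil => intro b _ ; simp
  | cons x t ih =>
    intro b hb
    match b with
    | [] => simp at hb
    | y :: s =>
      have hlen : t.length = s.length := by simpa using hb
      by_cases hx : f x
      · simp [List.filter_cons, hx, ih s hlen]
      · simp [List.filter_cons, hx, ih s hlen]

lemma zip_filter_snd (f : ℕ → Bool) : ∀ (a b : List ℕ), a.length = b.length →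
    ((a.zip b).filter (fun p => f p.2)).length = (b.filter f).length := by
  intro a
  induction a with
  | nil => intro b hb; rw [List.length_nil] at hb
           rw [(List.length_eq_zero_iff).mp hb.symm]; simp
  | cons x t ih =>
    intro b hb
    match b with
    | [] => simp at hb
    | y :: s =>
      have hlen : t.length = s.length := by simpa using hb
      by_cases hy : f y
      · simp [List.filter_cons, hy, ih s hlen]
      · simp [List.filter_cons, hy, ih s hlen]

lemma ms_zip_fst (a b : List ℕ) (h : a.length = b.length) (z : ℕ) :
    ((Multiset.filter (fun pr => pr.1 ≤ z) ((a.zip b : List (ℕ × ℕ)) : Multiset (ℕ × ℕ))).card : ℤ) = cntLE a z := by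
  rw [cntLE, ← zip_filter_fst (fun x => decide (x ≤ z)) a b h]
  congr 1

lemma ms_zip_snd (a b : List ℕ) (h : a.length = b.length) (z : ℕ) :
    ((Multiset.filter (fun pr => pr.2 ≤ z) ((a.zip b : List (ℕ × ℕ)) : Multiset (ℕ × ℕ))).card : ℤ) = cntLE b z := by
  rw [cntLE, ← zip_filter_snd (fun x => decide (x ≤ z)) a b h]
  congr 1

lemma ms_proj (T : Finset (ℕ × ℕ)) (A : Finset ℕ) (g : ℕ × ℕ → ℕ)
    (hT : T.val.map g = A.val) (z : ℕ) :
    (Multiset.filter (fun pr => g pr ≤ z) T.val).card = fcnt A z := by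
  have e1 : fcnt A z = (Multiset.filter (fun x => x ≤ z) A.val).card := by
    rw [fcnt, Finset.card_def, Finset.filter_val]
  rw [e1, ← hT, Multiset.filter_map, Multiset.card_map]
  rfl

lemma msLE_T_iff (hβ : β ∈ Itilde d) (hA : A ∈ Itilde d) (h : RowOK d β p q)
    (T : Finset (ℕ × ℕ)) (hT1 : T.val.map Prod.fst = (A \ β).val)
    (hT2 : T.val.map Prod.snd = (β \ A).val) :
    msLE ↑T.val ↑(p.zip q) ↔ IleD A (rowTheta β p q) := by
  rw [ileD_iff_fcnt (by rw [hA.2.1, h.card_theta hβ.2.1])]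
  unfold msLE
  constructor
  · intro hh z
    have := hh z
    rw [ms_zip_fst p q h.2.2.1 z, ms_zip_snd p q h.2.2.1 z,
      ms_proj T (A \ β) Prod.fst hT1 z, ms_proj T (β \ A) Prod.snd hT2 z, h.cnt z] at this
    have e := fcnt_diff_eq A β z
    omega
  · intro hh z
    have := hh z
    rw [ms_zip_fst p q h.2.2.1 z, ms_zip_snd p q h.2.2.1 z,
      ms_proj T (A \ β) Prod.fst hT1 z, ms_proj T (β \ A) Prod.snd hT2 z, h.cnt z]
    have e := fcnt_diff_eq A β z
    omega

lemma msLE_W_iff (hβ : β ∈ Itilde d) (hA : A ∈ Itilde d) (h : RowOK d β p q)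
    (T : Finset (ℕ × ℕ)) (hT1 : T.val.map Prod.fst = (A \ β).val)
    (hT2 : T.val.map Prod.snd = (β \ A).val) :
    msLE ↑(p.zip q) ↑T.val ↔ IleD (rowTheta β p q) A := by
  rw [ileD_iff_fcnt (by rw [hA.2.1, h.card_theta hβ.2.1])]
  unfold msLE
  constructor
  · intro hh z
    have := hh z
    rw [ms_zip_fst p q h.2.2.1 z, ms_zip_snd p q h.2.2.1 z,
      ms_proj T (A \ β) Prod.fst hT1 z, ms_proj T (β \ A) Prod.snd hT2 z, h.cnt z] at this
    have e := fcnt_diff_eq A β z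
    omega
  · intro hh z
    have := hh z
    rw [ms_zip_fst p q h.2.2.1 z, ms_zip_snd p q h.2.2.1 z,
      ms_proj T (A \ β) Prod.fst hT1 z, ms_proj T (β \ A) Prod.snd hT2 z, h.cnt z]
    have e := fcnt_diff_eq A β z
    omega

end Aux
namespace Aux
open OBRSKPaper

variable {d : ℕ} {β θ : Finset ℕ}

lemma lt_antisymm' : ∀ (a b : ℕ), a < b → b < a → a = b := fun _ _ h h' => absurd h' (asymm h)

instance : IsAntisymm ℕ (· < ·) := ⟨lt_antisymm'⟩

lemma eq_sort_of_sorted {l : List ℕ} (hl : l.Pairwise (· < ·)) {S : Finset ℕ}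
    (h : l.toFinset = S) : l = S.sort (· ≤ ·) := by
  have hnd : l.Nodup := hl.nodup
  have h1 : S.val = (l : Multiset ℕ) := by
    rw [← h]
    exact Multiset.dedup_eq_self.mpr (Multiset.coe_nodup.mpr hnd)
  have hperm : l.Perm (S.sort (· ≤ ·)) := by
    rw [← Multiset.coe_eq_coe, Finset.sort_eq]
    exact h1.symm
  exact hperm.eq_of_pairwise' hl (Finset.sort_sorted_lt S)

lemma sort_image_star (S : Finset ℕ) (hS : ∀ x ∈ S, 1 ≤ x ∧ x ≤ 2 * d) :
    (S.image (fun x => 2 * d + 1 - x)).sort (· ≤ ·)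
      = ((S.sort (· ≤ ·)).map (fun x => 2 * d + 1 - x)).reverse := by
  have hsorted : (((S.sort (· ≤ ·)).map (fun x => 2 * d + 1 - x)).reverse).Pairwise (· < ·) := by
    rw [List.pairwise_reverse, List.pairwise_map]
    apply List.Pairwise.imp_of_mem ?_ (Finset.sort_sorted_lt S)
    intro a b ha hb hab
    have haS := Finset.mem_sort (α := ℕ) (· ≤ ·) |>.mp ha
    have hbS := Finset.mem_sort (α := ℕ) (· ≤ ·) |>.mp hb
    have h1 := hS a haS
    have h2 := hS b hbS
    omega
  have hperm : ((S.image (fun x => 2 * d + 1 - x)).sort (· ≤ ·)).Perm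
      (((S.sort (· ≤ ·)).map (fun x => 2 * d + 1 - x)).reverse) := by
    rw [← Multiset.coe_eq_coe, Finset.sort_eq]
    have e1 : ((((S.sort (· ≤ ·)).map (fun x => 2 * d + 1 - x)).reverse : List ℕ) : Multiset ℕ)
        = (((S.sort (· ≤ ·)).map (fun x => 2 * d + 1 - x) : List ℕ) : Multiset ℕ) := by
      exact Multiset.coe_eq_coe.mpr (List.reverse_perm _)
    have e3 : (S.image (fun x => 2 * d + 1 - x)).val
        = Multiset.map (fun x => 2 * d + 1 - x) S.val := by
      rw [Finset.image_val]
      apply Multiset.dedup_eq_self.mpr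
      apply Multiset.Nodup.map_on
      · intro x hx y hy hxy
        have h1 := hS x (by simpa using hx)
        have h2 := hS y (by simpa using hy)
        omega
      · exact S.nodup
    rw [e1, e3, ← Multiset.map_coe, Finset.sort_eq]
  exact hperm.eq_of_pairwise' (Finset.sort_sorted_lt _) hsorted

lemma itilde_star_mem (hβ : β ∈ Itilde d) {x : ℕ} (hx : x ∈ β) : 2 * d + 1 - x ∉ β :=
  (hβ.2.2.1 x (hβ.1 hx)).mp hx

lemma itilde_star_not_mem (hβ : β ∈ Itilde d) {x : ℕ} (hx1 : x ∈ Finset.Icc 1 (2 * d))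
    (hx : x ∉ β) : 2 * d + 1 - x ∈ β := by
  by_contra h
  exact hx ((hβ.2.2.1 x hx1).mpr h)

lemma sdiff_star (hβ : β ∈ Itilde d) (hθ : θ ∈ Itilde d) :
    β \ θ = (θ \ β).image (fun x => 2 * d + 1 - x) := by
  ext y
  simp only [Finset.mem_sdiff, Finset.mem_image]
  constructor
  · rintro ⟨hyβ, hynθ⟩
    have hyI := Finset.mem_Icc.mp (hβ.1 hyβ)
    refine ⟨2 * d + 1 - y, ⟨?_, ?_⟩, show 2 * d + 1 - (2 * d + 1 - y) = y by omega⟩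
    · exact itilde_star_not_mem hθ (hβ.1 hyβ) hynθ
    · exact itilde_star_mem hβ hyβ
  · rintro ⟨x, ⟨hxθ, hxnβ⟩, rfl⟩
    exact ⟨itilde_star_not_mem hβ (hθ.1 hxθ) hxnβ, itilde_star_mem hθ hxθ⟩

lemma card_sdiff_eq (hβ : β ∈ Itilde d) (hθ : θ ∈ Itilde d) :
    (β \ θ).card = (θ \ β).card := by
  rw [sdiff_star hβ hθ]
  apply Finset.card_image_of_injOn
  intro x hx y hy hxy
  have hxy' : 2 * d + 1 - x = 2 * d + 1 - y := hxy
  have h1 := Finset.mem_Icc.mp (hθ.1 (Finset.mem_sdiff.mp hx).1)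
  have h2 := Finset.mem_Icc.mp (hθ.1 (Finset.mem_sdiff.mp hy).1)
  omega

lemma rowOK_of_theta (hβ : β ∈ Itilde d) (hθ : θ ∈ Itilde d) :
    RowOK d β ((θ \ β).sort (· ≤ ·)) ((β \ θ).sort (· ≤ ·)) := by
  refine ⟨Finset.sort_sorted_lt _, Finset.sort_sorted_lt _, ?_, ?_, ?_, ?_, ?_⟩
  · rw [Finset.length_sort, Finset.length_sort, card_sdiff_eq hβ hθ]
  · intro x hx
    have hx' := Finset.mem_sdiff.mp ((Finset.mem_sort (α := ℕ) (· ≤ ·)).mp hx)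
    exact ⟨hθ.1 hx'.1, hx'.2⟩
  · intro x hx
    exact (Finset.mem_sdiff.mp ((Finset.mem_sort (α := ℕ) (· ≤ ·)).mp hx)).1
  · intro x hx
    have hx' := Finset.mem_sdiff.mp ((Finset.mem_sort (α := ℕ) (· ≤ ·)).mp hx)
    apply (Finset.mem_sort (α := ℕ) (· ≤ ·)).mpr
    rw [Finset.mem_sdiff]
    exact ⟨itilde_star_not_mem hβ (hθ.1 hx'.1) hx'.2, itilde_star_mem hθ hx'.1⟩
  · intro y hy
    have hy' := Finset.mem_sdiff.mp ((Finset.mem_sort (α := ℕ) (· ≤ ·)).mp hy)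
    apply (Finset.mem_sort (α := ℕ) (· ≤ ·)).mpr
    rw [Finset.mem_sdiff]
    exact ⟨itilde_star_not_mem hθ (hβ.1 hy'.1) hy'.2, itilde_star_mem hβ hy'.1⟩

lemma qrev_eq_map_star (hβ : β ∈ Itilde d) (hθ : θ ∈ Itilde d) :
    ((β \ θ).sort (· ≤ ·)).reverse = ((θ \ β).sort (· ≤ ·)).map (fun x => 2 * d + 1 - x) := by
  have h := sort_image_star (d := d) (θ \ β) (fun x hx => by
    have := Finset.mem_Icc.mp (hθ.1 (Finset.mem_sdiff.mp hx).1)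
    omega)
  rw [← sdiff_star hβ hθ] at h
  rw [h, List.reverse_reverse]

lemma even_sdiff_card (hβ : β ∈ Itilde d) (hθ : θ ∈ Itilde d) :
    Even (β \ θ).card := by
  classical
  have h1 : (θ.filter (fun x => d < x)).card
      = ((θ \ β).filter (fun x => d < x)).card + ((θ ∩ β).filter (fun x => d < x)).card := by
    have hd : Disjoint ((θ \ β).filter (fun x => d < x)) ((θ ∩ β).filter (fun x => d < x)) :=
      Finset.disjoint_filter_filter ((Finset.sdiff_disjoint).mono_right Finset.inter_subset_right)
    rw [← Finset.card_union_of_disjoint hd, ← Finset.filter_union, Finset.sdiff_union_inter]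
  have h2 : (β.filter (fun x => d < x)).card
      = ((β \ θ).filter (fun x => d < x)).card + ((β ∩ θ).filter (fun x => d < x)).card := by
    have hd : Disjoint ((β \ θ).filter (fun x => d < x)) ((β ∩ θ).filter (fun x => d < x)) :=
      Finset.disjoint_filter_filter ((Finset.sdiff_disjoint).mono_right Finset.inter_subset_right)
    rw [← Finset.card_union_of_disjoint hd, ← Finset.filter_union, Finset.sdiff_union_inter]
  have hcomm : ((β ∩ θ).filter (fun x => d < x)).card = ((θ ∩ β).filter (fun x => d < x)).card := by
    rw [Finset.inter_comm]
  have h3 : ((θ \ β).filter (fun x => d < x)).card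
      = ((β \ θ).filter (fun x => ¬ d < x)).card := by
    apply Finset.card_bij (fun x _ => 2 * d + 1 - x)
    · intro x hx
      obtain ⟨hxm, hxd⟩ := Finset.mem_filter.mp hx
      obtain ⟨hxθ, hxnβ⟩ := Finset.mem_sdiff.mp hxm
      have hxI := Finset.mem_Icc.mp (hθ.1 hxθ)
      refine Finset.mem_filter.mpr ⟨Finset.mem_sdiff.mpr
        ⟨itilde_star_not_mem hβ (hθ.1 hxθ) hxnβ, itilde_star_mem hθ hxθ⟩, by omega⟩
    · intro x hx y hy hxy
      have h1' := Finset.mem_Icc.mp (hθ.1 (Finset.mem_sdiff.mp (Finset.mem_filter.mp hx).1).1)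
      have h2' := Finset.mem_Icc.mp (hθ.1 (Finset.mem_sdiff.mp (Finset.mem_filter.mp hy).1).1)
      omega
    · intro y hy
      obtain ⟨hym, hyd⟩ := Finset.mem_filter.mp hy
      obtain ⟨hyβ, hynθ⟩ := Finset.mem_sdiff.mp hym
      have hyI := Finset.mem_Icc.mp (hβ.1 hyβ)
      refine ⟨2 * d + 1 - y, Finset.mem_filter.mpr ⟨Finset.mem_sdiff.mpr
        ⟨itilde_star_not_mem hθ (hβ.1 hyβ) hynθ, itilde_star_mem hβ hyβ⟩, by omega⟩, by omega⟩
  have h4 : ((β \ θ).filter (fun x => d < x)).card + ((β \ θ).filter (fun x => ¬ d < x)).card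
      = (β \ θ).card := Finset.card_filter_add_card_filter_not _
  have hevβ := hβ.2.2.2
  have hevθ := hθ.2.2.2
  rw [Nat.even_iff] at *
  omega

end Aux
namespace Aux
open OBRSKPaper

variable {d : ℕ} {β : Finset ℕ}

/-- the map of the theorem -/
def img (β : Finset ℕ) (B : Bitab) : List (Finset ℕ) :=
  (B.P.zip B.Q).map (fun pq => rowTheta β pq.1 pq.2)

lemma pair_sum {B : Bitab} (hOn : B.OnBB d β) {i : ℕ} (hi : i < B.P.length)
    (hQl : B.Q.length = B.P.length)
    (hrl : (B.P.getD i []).length = (B.Q.getD i []).length) :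
    (∀ x ∈ B.P.getD i [], 2 * d + 1 - x ∈ B.Q.getD i []) ∧
    (∀ y ∈ B.Q.getD i [], 2 * d + 1 - y ∈ B.P.getD i []) := by
  set p := B.P.getD i [] with hp
  set q := B.Q.getD i [] with hq
  have hPmem : p ∈ B.P := by
    rw [hp, List.getD_eq_getElem _ _ hi]; exact List.getElem_mem hi
  have hQmem : q ∈ B.Q := by
    rw [hq, List.getD_eq_getElem _ _ (by omega : i < B.Q.length)]
    exact List.getElem_mem (by omega)
  have hzip_mem : (p, q) ∈ B.P.zip B.Q := by
    have hiz : i < (B.P.zip B.Q).length := by rw [List.length_zip]; omega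
    have he : (B.P.zip B.Q)[i] = (p, q) := by
      rw [List.getElem_zip, hp, hq, List.getD_eq_getElem _ _ hi,
        List.getD_eq_getElem _ _ (by omega : i < B.Q.length)]
    rw [← he]
    exact List.getElem_mem hiz
  constructor
  · intro x hx
    obtain ⟨j, hj, rfl⟩ := List.mem_iff_getElem.mp hx
    have hjr : j < q.reverse.length := by rw [List.length_reverse]; omega
    have hpair : (p[j], q.reverse[j]) ∈ B.entryDual := by
      apply List.mem_append_left
      apply List.mem_flatten.mpr
      refine ⟨p.zip q.reverse, List.mem_map.mpr ⟨(p, q), hzip_mem, rfl⟩, ?_⟩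
      have hjz : j < (p.zip q.reverse).length := by
        rw [List.length_zip]; omega
      have he : (p.zip q.reverse)[j] = (p[j], q.reverse[j]) := List.getElem_zip
      rw [← he]
      exact List.getElem_mem hjz
    have hsum : p[j] + q.reverse[j] = 2 * d + 1 := hOn.2.2 _ hpair
    have hxI := (hOn.1 p hPmem p[j] (List.getElem_mem hj)).1
    rw [Finset.mem_Icc] at hxI
    have hyq : q.reverse[j] ∈ q := List.mem_reverse.mp (List.getElem_mem hjr)
    have he : 2 * d + 1 - p[j] = q.reverse[j] := by omega
    rw [he]
    exact hyq
  · intro y hy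
    obtain ⟨j, hj, rfl⟩ := List.mem_iff_getElem.mp hy
    have hjr : j < p.reverse.length := by rw [List.length_reverse]; omega
    have hpair : (q[j], p.reverse[j]) ∈ B.entryDual := by
      apply List.mem_append_right
      apply List.mem_flatten.mpr
      refine ⟨q.zip p.reverse, List.mem_map.mpr ⟨(p, q), hzip_mem, rfl⟩, ?_⟩
      have hjz : j < (q.zip p.reverse).length := by
        rw [List.length_zip]; omega
      have he : (q.zip p.reverse)[j] = (q[j], p.reverse[j]) := List.getElem_zip
      rw [← he]
      exact List.getElem_mem hjz
    have hsum : q[j] + p.reverse[j] = 2 * d + 1 := hOn.2.2 _ hpair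
    have hyI : q[j] ∈ β := hOn.2.1 q hQmem q[j] (List.getElem_mem hj)
    have hxp : p.reverse[j] ∈ p := List.mem_reverse.mp (List.getElem_mem hjr)
    have hxI := (hOn.1 p hPmem _ hxp).1
    rw [Finset.mem_Icc] at hxI
    have he : 2 * d + 1 - q[j] = p.reverse[j] := by omega
    rw [he]
    exact hxp

lemma rows_ok {B : Bitab} (hSS : B.SkewSymm) (hOn : B.OnBB d β) :
    B.Q.length = B.P.length ∧
    ∀ i, i < B.P.length → RowOK d β (B.P.getD i []) (B.Q.getD i [])
      ∧ Even (B.P.getD i []).length := by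
  have hshape := hSS.1.1
  have hQl : B.Q.length = B.P.length := by
    have := congrArg List.length hshape
    simpa using this.symm
  refine ⟨hQl, fun i hi => ?_⟩
  have hPmem : B.P.getD i [] ∈ B.P := by
    rw [List.getD_eq_getElem _ _ hi]; exact List.getElem_mem hi
  have hQmem : B.Q.getD i [] ∈ B.Q := by
    rw [List.getD_eq_getElem _ _ (by omega : i < B.Q.length)]
    exact List.getElem_mem (by omega)
  have hrl : (B.P.getD i []).length = (B.Q.getD i []).length := by
    have h1 : (B.P.map List.length).getD i 0 = (B.Q.map List.length).getD i 0 := by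
      rw [hshape]
    rw [List.getD_eq_getElem _ _ (by simpa using hi),
      List.getD_eq_getElem _ _ (by rw [List.length_map]; omega),
      List.getElem_map, List.getElem_map] at h1
    rw [List.getD_eq_getElem _ _ hi, List.getD_eq_getElem _ _ (by omega : i < B.Q.length)]
    exact h1
  have hps := pair_sum hOn hi hQl hrl
  refine ⟨⟨hSS.1.2.1.1 _ hPmem, hSS.1.2.1.2 _ hQmem, hrl,
    fun x hx => hOn.1 _ hPmem x hx, fun x hx => hOn.2.1 _ hQmem x hx,
    hps.1, hps.2⟩, hSS.2.1 _ hPmem⟩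

end Aux
namespace Aux
open OBRSKPaper

variable {d : ℕ} {β : Finset ℕ}

/-- the inverse map -/
def bld (β : Finset ℕ) (L : List (Finset ℕ)) : Bitab :=
  ⟨L.map (fun θ => (θ \ β).sort (· ≤ ·)), L.map (fun θ => (β \ θ).sort (· ≤ ·))⟩

lemma rowTheta_sort (β θ : Finset ℕ) :
    rowTheta β ((θ \ β).sort (· ≤ ·)) ((β \ θ).sort (· ≤ ·)) = θ := by
  rw [rowTheta, Finset.sort_toFinset, Finset.sort_toFinset, sdiff_sdiff_right_self,
    Finset.inf_eq_inter, Finset.inter_comm β θ]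
  exact Finset.sdiff_union_inter θ β

lemma img_bld (L : List (Finset ℕ)) : img β (bld β L) = L := by
  simp only [img, bld]
  show ((L.map _).zip (L.map _)).map _ = L
  rw [List.zip_map']
  rw [List.map_map]
  conv_rhs => rw [← List.map_id L]
  apply List.map_congr_left
  intro θ _
  exact rowTheta_sort β θ

lemma img_length {B : Bitab} (hQl : B.Q.length = B.P.length) :
    (img β B).length = B.P.length := by
  simp only [img, List.length_map, List.length_zip]
  omega

lemma img_get {B : Bitab} (hQl : B.Q.length = B.P.length) {i : ℕ}
    (hi : i < (img β B).length) :
    (img β B)[i] = rowTheta β (B.P.getD i []) (B.Q.getD i []) := by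
  have hi' : i < B.P.length := by rwa [img_length hQl] at hi
  simp only [img] at hi ⊢
  rw [List.getElem_map, List.getElem_zip,
    List.getD_eq_getElem _ _ hi', List.getD_eq_getElem _ _ (by omega : i < B.Q.length)]

lemma img_mem_form {B : Bitab} (hQl : B.Q.length = B.P.length) {θ : Finset ℕ}
    (hθ : θ ∈ img β B) :
    ∃ i, ∃ _ : i < B.P.length, θ = rowTheta β (B.P.getD i []) (B.Q.getD i []) := by
  obtain ⟨i, hi, he⟩ := List.mem_iff_getElem.mp hθ
  have hi' : i < B.P.length := by rwa [img_length hQl] at hi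
  exact ⟨i, hi', by rw [← he, img_get hQl hi]⟩

lemma bitab_ext {B B' : Bitab} (h1 : B.P = B'.P) (h2 : B.Q = B'.Q) : B = B' := by
  cases B; cases B'
  simp only at h1 h2
  rw [h1, h2]

lemma reconstruct {B : Bitab} (hSS : B.SkewSymm) (hOn : B.OnBB d β) :
    B = bld β (img β B) := by
  obtain ⟨hQl, hrows⟩ := rows_ok hSS hOn
  have himgl : (img β B).length = B.P.length := img_length hQl
  apply bitab_ext
  · apply List.ext_getElem (by simp only [bld, List.length_map]; rw [himgl])
    intro i hi1 hi2
    show B.P[i] = _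
    simp only [bld]
    rw [List.getElem_map]
    have hil : i < (img β B).length := by simp only [bld, List.length_map] at hi2; exact hi2
    rw [img_get hQl hil]
    have hrok := (hrows i hi1).1
    have hthis := eq_sort_of_sorted hrok.1 hrok.pset.symm
    rw [show B.P[i] = B.P.getD i [] from (List.getD_eq_getElem _ _ hi1).symm]
    exact hthis
  · apply List.ext_getElem
      (by simp only [bld, List.length_map]; rw [himgl, hQl])
    intro i hi1 hi2
    show B.Q[i] = _
    simp only [bld]
    rw [List.getElem_map]
    have hil : i < (img β B).length := by simp only [bld, List.length_map] at hi2; exact hi2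
    rw [img_get hQl hil]
    have hrok := (hrows i (by omega)).1
    have hthis := eq_sort_of_sorted hrok.2.1 hrok.qset.symm
    rw [show B.Q[i] = B.Q.getD i [] from (List.getD_eq_getElem _ _ (by omega : i < B.Q.length)).symm]
    exact hthis

end Aux
namespace Aux
open OBRSKPaper

lemma forward {d m : ℕ} {α β γ : Finset ℕ}
    (hα : α ∈ Itilde d) (hβ : β ∈ Itilde d) (hγ : γ ∈ Itilde d)
    (hαβ : IleD α β) (hβγ : IleD β γ)
    {Tα Wγ : Finset (ℕ × ℕ)}
    (hTα1 : Tα.val.map Prod.fst = (α \ β).val)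
    (hTα2 : Tα.val.map Prod.snd = (β \ α).val)
    (hWγ1 : Wγ.val.map Prod.fst = (γ \ β).val)
    (hWγ2 : Wγ.val.map Prod.snd = (β \ γ).val)
    (hm : 0 < m) {B : Bitab}
    (hSS : B.SkewSymm) (hNV : B.Nonvanishing) (hOn : B.OnBB d β)
    (hBd : B.BoundedBy Tα Wγ) (hdeg : B.degree = 2 * m) :
    (∀ θ ∈ img β B, θ ∈ Itilde d) ∧
    (img β B).Chain' IleD ∧
    (∀ θ ∈ img β B, IltD θ β ∨ IltD β θ) ∧
    (∀ θ₀, (img β B).head? = some θ₀ → IleD α θ₀) ∧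
    (∀ θr, (img β B).getLast? = some θr → IleD θr γ) ∧
    ((img β B).map (fun θ => (β \ θ).card)).sum = 2 * m := by
  obtain ⟨hQl, hrows⟩ := rows_ok hSS hOn
  have himgl := img_length (β := β) hQl
  have hdeg' : (B.P.map List.length).sum = 2 * m := hdeg
  have hnpos : 0 < B.P.length := by
    by_contra h
    push_neg at h
    have hnil : B.P = [] := List.length_eq_zero_iff.mp (by omega)
    rw [hnil] at hdeg'
    simp at hdeg'
    omega
  refine ⟨?_, ?_, ?_, ?_, ?_, ?_⟩
  · intro θ hθ
    obtain ⟨i, hi, rfl⟩ := img_mem_form hQl hθ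
    exact ((hrows i hi).1).theta_mem hβ (hrows i hi).2
  · show List.IsChain _ _
    rw [List.isChain_iff_getElem]
    intro i hi
    rw [himgl] at hi
    have hi1 : i < B.P.length := by omega
    have hi2 : i + 1 < B.P.length := by omega
    rw [img_get hQl (by omega), img_get hQl (by omega)]
    exact (diffLE_iff hβ (hrows i hi1).1 (hrows (i+1) hi2).1).mp
      (hSS.1.2.2.2 i hi2)
  · intro θ hθ
    obtain ⟨i, hi, rfl⟩ := img_mem_form hQl hθ
    rcases hNV.2 i hi with hneg | hpos
    · exact Or.inl ((diffLT_neg_iff hβ (hrows i hi).1).mp hneg)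
    · exact Or.inr ((diffLT_pos_iff hβ (hrows i hi).1).mp hpos)
  · intro θ₀ h0
    rw [List.head?_eq_getElem?, List.getElem?_eq_getElem (by omega : 0 < (img β B).length)]
      at h0
    have hθ0 : θ₀ = rowTheta β (B.P.getD 0 []) (B.Q.getD 0 []) := by
      rw [← img_get hQl (by omega : 0 < (img β B).length)]
      exact (Option.some.inj h0).symm
    rw [hθ0]
    rcases hNV.2 0 hnpos with hneg | hpos
    · exact (msLE_T_iff hβ hα (hrows 0 hnpos).1 Tα hTα1 hTα2).mp (hBd.1 hneg)
    · exact ileD_trans hαβ ((diffLT_pos_iff hβ (hrows 0 hnpos).1).mp hpos).1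
  · intro θr h0
    have hlast : B.P.length - 1 < B.P.length := by omega
    rw [List.getLast?_eq_getElem?,
      List.getElem?_eq_getElem (by omega : (img β B).length - 1 < (img β B).length)] at h0
    have hil : B.P.length - 1 < (img β B).length := by omega
    have h0' : (img β B).getD ((img β B).length - 1) ∅ = θr := by
      rw [List.getD_eq_getElem _ _ (by omega : (img β B).length - 1 < (img β B).length)]
      exact Option.some.inj h0
    rw [himgl] at h0'
    have hθr : θr = rowTheta β (B.P.getD (B.P.length - 1) []) (B.Q.getD (B.P.length - 1) []) := by
      rw [← h0', List.getD_eq_getElem _ _ hil, img_get hQl hil]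
    rw [hθr]
    rcases hNV.2 (B.P.length - 1) hlast with hneg | hpos
    · exact ileD_trans ((diffLT_neg_iff hβ (hrows _ hlast).1).mp hneg).1 hβγ
    · have hpos' : diffLT [] [] (B.P.getD (B.P.length - 1) []) (B.Q.getD (B.Q.length - 1) []) := by
        rw [hQl]; exact hpos
      have hms := hBd.2 hpos'
      rw [hQl] at hms
      exact (msLE_W_iff hβ hγ (hrows _ hlast).1 Wγ hWγ1 hWγ2).mp hms
  · have hmap : (img β B).map (fun θ => (β \ θ).card) = B.P.map List.length := by
      apply List.ext_getElem (by rw [List.length_map, List.length_map, himgl])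
      intro i h1 h2
      have hi : i < B.P.length := by rw [List.length_map, himgl] at h1; exact h1
      rw [List.getElem_map, List.getElem_map, img_get hQl (by rw [himgl]; exact hi),
        (hrows i hi).1.qset, List.toFinset_card_of_nodup (hrows i hi).1.2.1.nodup,
        ← (hrows i hi).1.2.2.1, List.getD_eq_getElem _ _ hi]
    rw [hmap]
    exact hdeg'

end Aux
namespace Aux
open OBRSKPaper

variable {d : ℕ} {β : Finset ℕ}

lemma zip_map_self (f : ℕ → ℕ) : ∀ (l : List ℕ), l.zip (l.map f) = l.map (fun x => (x, f x))
  | [] => by simp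
  | x :: t => by simp [zip_map_self f t]

lemma bld_getP {L : List (Finset ℕ)} {i : ℕ} (hi : i < L.length) :
    (bld β L).P.getD i [] = ((L[i] \ β).sort (· ≤ ·)) := by
  simp only [bld]
  rw [List.getD_eq_getElem _ _ (by simpa using hi), List.getElem_map]

lemma bld_getQ {L : List (Finset ℕ)} {i : ℕ} (hi : i < L.length) :
    (bld β L).Q.getD i [] = ((β \ L[i]).sort (· ≤ ·)) := by
  simp only [bld]
  rw [List.getD_eq_getElem _ _ (by simpa using hi), List.getElem_map]

lemma bld_dual_pairs {L : List (Finset ℕ)} (hβ : β ∈ Itilde d)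
    (hL1 : ∀ θ ∈ L, θ ∈ Itilde d) :
    ∀ pr ∈ (bld β L).entryDual, pr.2 = 2 * d + 1 - pr.1 ∧ pr.1 ∈ Finset.Icc 1 (2 * d) := by
  intro pr hpr
  have hzip : (bld β L).P.zip (bld β L).Q
      = L.map (fun θ => (((θ \ β).sort (· ≤ ·)), ((β \ θ).sort (· ≤ ·)))) := by
    simp only [bld]
    exact List.zip_map'
  rcases List.mem_append.mp hpr with h | h
  · obtain ⟨lp, hlp, hmem⟩ := List.mem_flatten.mp h
    obtain ⟨pq, hpq, rfl⟩ := List.mem_map.mp hlp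
    rw [hzip] at hpq
    obtain ⟨θ, hθ, rfl⟩ := List.mem_map.mp hpq
    rw [qrev_eq_map_star hβ (hL1 θ hθ), zip_map_self] at hmem
    obtain ⟨x, hx, rfl⟩ := List.mem_map.mp hmem
    have hxm := (Finset.mem_sdiff.mp ((Finset.mem_sort (α := ℕ) (· ≤ ·)).mp hx)).1
    exact ⟨rfl, (hL1 θ hθ).1 hxm⟩
  · obtain ⟨lp, hlp, hmem⟩ := List.mem_flatten.mp h
    obtain ⟨pq, hpq, rfl⟩ := List.mem_map.mp hlp
    rw [hzip] at hpq
    obtain ⟨θ, hθ, rfl⟩ := List.mem_map.mp hpq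
    rw [qrev_eq_map_star (hL1 θ hθ) hβ, zip_map_self] at hmem
    obtain ⟨x, hx, rfl⟩ := List.mem_map.mp hmem
    have hxm := (Finset.mem_sdiff.mp ((Finset.mem_sort (α := ℕ) (· ≤ ·)).mp hx)).1
    exact ⟨rfl, hβ.1 hxm⟩

lemma backward {d m : ℕ} {α β γ : Finset ℕ}
    (hα : α ∈ Itilde d) (hβ : β ∈ Itilde d) (hγ : γ ∈ Itilde d)
    {Tα Wγ : Finset (ℕ × ℕ)}
    (hTα1 : Tα.val.map Prod.fst = (α \ β).val)
    (hTα2 : Tα.val.map Prod.snd = (β \ α).val)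
    (hWγ1 : Wγ.val.map Prod.fst = (γ \ β).val)
    (hWγ2 : Wγ.val.map Prod.snd = (β \ γ).val)
    {L : List (Finset ℕ)}
    (hL1 : ∀ θ ∈ L, θ ∈ Itilde d) (hL2 : L.Chain' IleD)
    (hL3 : ∀ θ ∈ L, IltD θ β ∨ IltD β θ)
    (hL4 : ∀ θ₀, L.head? = some θ₀ → IleD α θ₀)
    (hL5 : ∀ θr, L.getLast? = some θr → IleD θr γ)
    (hL6 : (L.map (fun θ => (β \ θ).card)).sum = 2 * m) :
    (bld β L).SkewSymm ∧ (bld β L).Nonvanishing ∧ (bld β L).OnBB d β ∧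
    (bld β L).BoundedBy Tα Wγ ∧ (bld β L).degree = 2 * m := by
  have hPl : (bld β L).P.length = L.length := by simp [bld]
  have hQl2 : (bld β L).Q.length = L.length := by simp [bld]
  have hrow : ∀ i, i < L.length →
      RowOK d β ((bld β L).P.getD i []) ((bld β L).Q.getD i []) := by
    intro i hi
    rw [bld_getP hi, bld_getQ hi]
    exact rowOK_of_theta hβ (hL1 _ (List.getElem_mem hi))
  have hshape : (bld β L).SameShape := by
    simp only [Bitab.SameShape, bld, List.map_map]
    apply List.map_congr_left
    intro θ hθ
    simp only [Function.comp]
    rw [Finset.length_sort, Finset.length_sort]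
    exact (card_sdiff_eq hβ (hL1 θ hθ)).symm
  have hrowstrict : (bld β L).RowStrict := by
    constructor
    · intro r hr
      simp only [bld] at hr
      obtain ⟨θ, _, rfl⟩ := List.mem_map.mp hr
      exact Finset.sort_sorted_lt _
    · intro r hr
      simp only [bld] at hr
      obtain ⟨θ, _, rfl⟩ := List.mem_map.mp hr
      exact Finset.sort_sorted_lt _
  have hentpos : (bld β L).EntriesPos := by
    constructor
    · intro r hr x hx
      simp only [bld] at hr
      obtain ⟨θ, hθ, rfl⟩ := List.mem_map.mp hr
      have hxm := (Finset.mem_sdiff.mp ((Finset.mem_sort (α := ℕ) (· ≤ ·)).mp hx)).1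
      have := Finset.mem_Icc.mp ((hL1 θ hθ).1 hxm)
      omega
    · intro r hr x hx
      simp only [bld] at hr
      obtain ⟨θ, hθ, rfl⟩ := List.mem_map.mp hr
      have hxm := (Finset.mem_sdiff.mp ((Finset.mem_sort (α := ℕ) (· ≤ ·)).mp hx)).1
      have := Finset.mem_Icc.mp (hβ.1 hxm)
      omega
  have hsemi : (bld β L).Semistandard := by
    refine ⟨hshape, hrowstrict, hentpos, ?_⟩
    intro i hi
    rw [hPl] at hi
    have hi1 : i < L.length := by omega
    apply (diffLE_iff hβ (hrow i hi1) (hrow (i+1) hi)).mpr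
    rw [bld_getP hi1, bld_getQ hi1, bld_getP hi, bld_getQ hi,
      rowTheta_sort, rowTheta_sort]
    have := List.isChain_iff_getElem.mp hL2 i (by omega)
    exact this
  have hskew : (bld β L).SkewSymm := by
    refine ⟨hsemi, ?_, ?_⟩
    · intro r hr
      simp only [bld] at hr
      obtain ⟨θ, hθ, rfl⟩ := List.mem_map.mp hr
      rw [Finset.length_sort]
      exact card_sdiff_eq hβ (hL1 θ hθ) ▸ even_sdiff_card hβ (hL1 θ hθ)
    · intro p hp q hq
      obtain ⟨hp2, hp1⟩ := bld_dual_pairs hβ hL1 p hp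
      obtain ⟨hq2, hq1⟩ := bld_dual_pairs hβ hL1 q hq
      rw [Finset.mem_Icc] at hp1 hq1
      exact ⟨fun h => by omega, fun h => by omega, fun h => by omega⟩
  have hnv : (bld β L).Nonvanishing := by
    refine ⟨hsemi, ?_⟩
    intro i hi
    rw [hPl] at hi
    rw [bld_getP hi, bld_getQ hi]
    rcases hL3 L[i] (List.getElem_mem hi) with h | h
    · left
      apply (diffLT_neg_iff hβ (rowOK_of_theta hβ (hL1 _ (List.getElem_mem hi)))).mpr
      rw [rowTheta_sort]
      exact h
    · right
      apply (diffLT_pos_iff hβ (rowOK_of_theta hβ (hL1 _ (List.getElem_mem hi)))).mpr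
      rw [rowTheta_sort]
      exact h
  have honbb : (bld β L).OnBB d β := by
    refine ⟨?_, ?_, ?_⟩
    · intro r hr x hx
      simp only [bld] at hr
      obtain ⟨θ, hθ, rfl⟩ := List.mem_map.mp hr
      have hxm := Finset.mem_sdiff.mp ((Finset.mem_sort (α := ℕ) (· ≤ ·)).mp hx)
      exact ⟨(hL1 θ hθ).1 hxm.1, hxm.2⟩
    · intro r hr x hx
      simp only [bld] at hr
      obtain ⟨θ, hθ, rfl⟩ := List.mem_map.mp hr
      exact (Finset.mem_sdiff.mp ((Finset.mem_sort (α := ℕ) (· ≤ ·)).mp hx)).1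
    · intro pr hpr
      obtain ⟨hp2, hp1⟩ := bld_dual_pairs hβ hL1 pr hpr
      rw [Finset.mem_Icc] at hp1
      omega
  have hbd : (bld β L).BoundedBy Tα Wγ := by
    constructor
    · intro hneg
      by_cases hLnil : L = []
      · subst hLnil
        simp only [bld, List.map_nil, List.getD_nil] at hneg
        exact absurd hneg diffLT_nil_nil_false
      · have hi0 : 0 < L.length := List.length_pos_iff.mpr hLnil
        have hhead : L.head? = some L[0] := by
          rw [List.head?_eq_getElem?, List.getElem?_eq_getElem hi0]
        have hα0 := hL4 _ hhead
        rw [bld_getP hi0, bld_getQ hi0]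
        apply (msLE_T_iff hβ hα (rowOK_of_theta hβ (hL1 _ (List.getElem_mem hi0)))
          Tα hTα1 hTα2).mpr
        rw [rowTheta_sort]
        exact hα0
    · intro hpos
      by_cases hLnil : L = []
      · subst hLnil
        simp only [bld, List.map_nil, List.getD_nil] at hpos
        exact absurd hpos diffLT_nil_nil_false
      · have hi0 : 0 < L.length := List.length_pos_iff.mpr hLnil
        have hlast : L.length - 1 < L.length := by omega
        have hgl : L.getLast? = some L[L.length - 1] := by
          rw [List.getLast?_eq_getElem?, List.getElem?_eq_getElem hlast]
        have hγr := hL5 _ hgl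
        rw [hPl, hQl2, bld_getP hlast, bld_getQ hlast]
        apply (msLE_W_iff hβ hγ (rowOK_of_theta hβ (hL1 _ (List.getElem_mem hlast)))
          Wγ hWγ1 hWγ2).mpr
        rw [rowTheta_sort]
        exact hγr
  have hdeg : (bld β L).degree = 2 * m := by
    show ((bld β L).P.map List.length).sum = 2 * m
    simp only [bld, List.map_map]
    have he : L.map (List.length ∘ fun θ => (θ \ β).sort (· ≤ ·))
        = L.map (fun θ => (β \ θ).card) := by
      apply List.map_congr_left
      intro θ hθ
      simp only [Function.comp]
      rw [Finset.length_sort]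
      exact (card_sdiff_eq (hL1 θ hθ) hβ)
    rw [he]
    exact hL6
  exact ⟨hskew, hnv, honbb, hbd, hdeg⟩

end Aux

/-- For `α ≤ β ≤ γ` in `Ĩ(d)`, with `T_α`, `W_γ` subsets of `β̄×β` whose
coordinate projections are `(α∖β, β∖α)` and `(γ∖β, β∖γ)` respectively, and every positive
integer `m` : the map sending a nonvanishing skew-symmetric notched bitableau `(P,Q)` on
`β̄×β` with rows `(P_i,Q_i)` to the sequence `(θ_1,…,θ_r)`, `θ_i := P_i ∪̇ (β ∖ Q_i)`, is
a bijection from the degree-`2m` nonvanishing skew-symmetric notched bitableaux on `β̄×β`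
bounded by `T_α, W_γ` onto the sequences `θ_1 ≤ ⋯ ≤ θ_r` in `Ĩ(d)` with each `θ_i < β` or
`θ_i > β`, `α ≤ θ_1`, `θ_r ≤ γ`, and total `β`-degree `m` (the `β`-degree of `τ` being
half of `|β∖τ|`). -/
theorem stmt17 (d : ℕ) (hd : 0 < d) (α β γ : Finset ℕ)
    (hα : α ∈ Itilde d) (hβ : β ∈ Itilde d) (hγ : γ ∈ Itilde d)
    (hαβ : IleD α β) (hβγ : IleD β γ)
    (Tα Wγ : Finset (ℕ × ℕ))
    (hTα1 : Tα.val.map Prod.fst = (α \ β).val)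
    (hTα2 : Tα.val.map Prod.snd = (β \ α).val)
    (hWγ1 : Wγ.val.map Prod.fst = (γ \ β).val)
    (hWγ2 : Wγ.val.map Prod.snd = (β \ γ).val)
    (hTsub : ∀ p ∈ Tα, p.1 ∈ Finset.Icc 1 (2 * d) \ β ∧ p.2 ∈ β)
    (hWsub : ∀ p ∈ Wγ, p.1 ∈ Finset.Icc 1 (2 * d) \ β ∧ p.2 ∈ β)
    (m : ℕ) (hm : 0 < m) :
    Set.BijOn (fun B : Bitab => (B.P.zip B.Q).map (fun pq => rowTheta β pq.1 pq.2))
      {B : Bitab | B.SkewSymm ∧ B.Nonvanishing ∧ B.OnBB d β ∧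
        B.BoundedBy Tα Wγ ∧ B.degree = 2 * m}
      {L : List (Finset ℕ) |
        (∀ θ ∈ L, θ ∈ Itilde d) ∧
        L.Chain' IleD ∧
        (∀ θ ∈ L, IltD θ β ∨ IltD β θ) ∧
        (∀ θ₀, L.head? = some θ₀ → IleD α θ₀) ∧
        (∀ θr, L.getLast? = some θr → IleD θr γ) ∧
        (L.map (fun θ => (β \ θ).card)).sum = 2 * m} := by
  refine ⟨?_, ?_, ?_⟩
  · intro B hB
    obtain ⟨h1, h2, h3, h4, h5⟩ := hB
    exact Aux.forward hα hβ hγ hαβ hβγ hTα1 hTα2 hWγ1 hWγ2 hm h1 h2 h3 h4 h5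
  · intro B1 h1 B2 h2 heq
    have heq' : Aux.img β B1 = Aux.img β B2 := heq
    have e1 := Aux.reconstruct h1.1 h1.2.2.1
    have e2 := Aux.reconstruct h2.1 h2.2.2.1
    rw [e1, e2, heq']
  · intro L hL
    obtain ⟨hL1, hL2, hL3, hL4, hL5, hL6⟩ := hL
    refine ⟨Aux.bld β L, ?_, ?_⟩
    · exact Aux.backward hα hβ hγ hTα1 hTα2 hWγ1 hWγ2 hL1 hL2 hL3 hL4 hL5 hL6
    · exact Aux.img_bld L
end

section
/- Let d be a positive integer, let α ≤ β ≤ γ in Ĩ(d), set (R_α,S_α) := (α∖β, β∖α), (R_γ,S_γ) := (γ∖β, β∖γ), and let T_α and W_γ be subsets of β̄×β whose multisets of first coordinates are R_α and R_γ and whose multisets of second coordinates are S_α and S_γ respectively. Then for every nonempty multiset U on OR(β), the following are equivalent: (a) the underlying set of U contains no nonvanishing extended β-chain C such that either (C^− is nonempty and T_α ≰ OBRSK(ψ^{-1}({C^−,(C^−)^#}))^up) or (C^+ is nonempty and OBRSK(ψ^{-1}({C^+,(C^+)^#}))^down ≰ W_γ); (b) the pair {U,U^#} is bounded by T_α, W_γ.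 -/
namespace OBRSKPaper
namespace Pf18

open List

/-- Bounds for the elements of `U`. -/
def Bnd (d : ℕ) (p : ℕ × ℕ) : Prop := 1 ≤ p.1 ∧ 1 ≤ p.2 ∧ p.1 + p.2 ≤ 2 * d

lemma AP_ext {x y : ArrayPair} (ha : x.a = y.a) (hb : x.b = y.b)
    (hc : x.c = y.c) (hd : x.d = y.d) : x = y := by
  cases x; cases y; simp_all

lemma zip_rev {α β : Type*} (l1 : List α) (l2 : List β) (h : l1.length = l2.length) :
    l1.reverse.zip l2.reverse = (l1.zip l2).reverse := by
  apply List.ext_getElem (by simp [h])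
  intro i h1 h2
  simp only [List.length_zip, List.length_reverse, h, min_self] at h1 h2
  rw [List.getElem_zip, List.getElem_reverse, List.getElem_reverse, List.getElem_reverse,
    List.getElem_zip]
  simp [h]

/-! ### chainToPair computations -/

lemma ctp_a (d : ℕ) (l : List (ℕ × ℕ)) : (chainToPair d l).a = l.map Prod.fst := rfl
lemma ctp_b (d : ℕ) (l : List (ℕ × ℕ)) : (chainToPair d l).b = l.map Prod.snd := rfl
lemma ctp_c (d : ℕ) (l : List (ℕ × ℕ)) :
    (chainToPair d l).c = (l.map (fun p => 2 * d + 1 - p.1)).reverse := rfl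
lemma ctp_d (d : ℕ) (l : List (ℕ × ℕ)) :
    (chainToPair d l).d = (l.map (fun p => 2 * d + 1 - p.2)).reverse := rfl

lemma ctp_t (d : ℕ) (l : List (ℕ × ℕ)) : (chainToPair d l).t = l.length := by
  simp [ArrayPair.t, chainToPair]

lemma ctp_zip_ab (d : ℕ) (l : List (ℕ × ℕ)) :
    (chainToPair d l).a.zip (chainToPair d l).b = l := by
  rw [ctp_a, ctp_b, zip_map']; simp

lemma ctp_zip_ba (d : ℕ) (l : List (ℕ × ℕ)) :
    (chainToPair d l).b.zip (chainToPair d l).a = l.map (fun p => (p.2, p.1)) := by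
  rw [ctp_a, ctp_b, zip_map']

lemma ctp_zip_dc (d : ℕ) (l : List (ℕ × ℕ)) :
    (chainToPair d l).d.zip (chainToPair d l).c
      = (l.map (fun p => (2 * d + 1 - p.2, 2 * d + 1 - p.1))).reverse := by
  rw [ctp_c, ctp_d, zip_rev _ _ (by simp), zip_map']

lemma ctp_zip_cd (d : ℕ) (l : List (ℕ × ℕ)) :
    (chainToPair d l).c.zip (chainToPair d l).d
      = (l.map (fun p => (2 * d + 1 - p.1, 2 * d + 1 - p.2))).reverse := by
  rw [ctp_c, ctp_d, zip_rev _ _ (by simp), zip_map']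

/-! ### getD helpers -/

lemma getD_map (f : ℕ × ℕ → ℕ) (l : List (ℕ × ℕ)) {k : ℕ} (h : k < l.length) :
    (l.map f).getD k 0 = f (l[k]'h) := by
  rw [List.getD_eq_getElem _ _ (by simpa using h), List.getElem_map]

lemma getD_map_rev (f : ℕ × ℕ → ℕ) (l : List (ℕ × ℕ)) {k j : ℕ} (h : k < l.length)
    (hj : l.length - 1 - k = j) (hjl : j < l.length) :
    (l.map f).reverse.getD k 0 = f (l[j]'hjl) := by
  rw [List.getD_eq_getElem _ _ (by simpa using h), List.getElem_reverse, List.getElem_map]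
  congr 1
  simp [hj]

/-! ### sortedness -/

def SortedP (l : List (ℕ × ℕ)) : Prop :=
  ∀ i (h : i + 1 < l.length),
    (l[i+1]'h).2 ≤ (l[i]'(by omega)).2 ∧
      ((l[i+1]'h).2 = (l[i]'(by omega)).2 → (l[i+1]'h).1 ≤ (l[i]'(by omega)).1)

def leB : ℕ × ℕ → ℕ × ℕ → Bool := fun p q => decide (q.2 < p.2 ∨ (p.2 = q.2 ∧ q.1 ≤ p.1))

lemma sortedP_mergeSort (l : List (ℕ × ℕ)) : SortedP (l.mergeSort leB) := by
  have hp := List.pairwise_mergeSort (le := leB)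
    (fun a b c hab hbc => by
      simp only [leB, decide_eq_true_eq] at *; omega)
    (fun a b => by
      simp only [leB, Bool.or_eq_true, decide_eq_true_eq]; omega) l
  have hc := hp.isChain
  rw [List.isChain_iff_getElem] at hc
  intro i h
  have h2 := hc i (by omega)
  simp only [List.get_eq_getElem, leB, decide_eq_true_eq] at h2
  exact ⟨by omega, by omega⟩

lemma sortedP_of_chain {l : List (ℕ × ℕ)} (h : IsExtChain l) : SortedP l := by
  rw [IsExtChain, List.Chain', List.isChain_iff_getElem] at h
  intro i hi
  have h2 := h i (by omega)
  exact ⟨by omega, by omega⟩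

lemma chain_zip {l1 l2 : List ℕ} (h : l1.length = l2.length)
    (h1 : List.Chain' (· < ·) l1) (h2 : List.Chain' (· > ·) l2) :
    IsExtChain (l1.zip l2) := by
  rw [IsExtChain, List.Chain', List.isChain_iff_getElem]
  rw [List.Chain', List.isChain_iff_getElem] at h1 h2
  intro i hi
  simp only [List.length_zip] at hi
  simp only [List.get_eq_getElem, List.getElem_zip]
  exact ⟨h1 i (by omega), h2 i (by omega)⟩

/-! ### duality helpers -/

lemma dualityProp_of_compl {d : ℕ} {L : List (ℕ × ℕ)}
    (h : ∀ q ∈ L, 1 ≤ q.1 ∧ q.1 ≤ 2 * d ∧ q.2 = 2 * d + 1 - q.1) : DualityProp L := by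
  intro p hp q hq
  have h1 := h p hp; have h2 := h q hq
  refine ⟨fun _ => ?_, fun _ => ?_, fun _ => ?_⟩ <;> omega

lemma countP_lt_of_witness {α : Type*} {l : List α} {p q : α → Bool}
    (hmono : ∀ b ∈ l, q b = true → p b = true)
    {a : α} (ha : a ∈ l) (hpa : p a = true) (hqa : q a = false) :
    l.countP q < l.countP p := by
  obtain ⟨s, t, rfl⟩ := List.append_of_mem ha
  have h1 : s.countP q ≤ s.countP p :=
    List.countP_mono_left (fun b hb => hmono b (by simp [hb]))
  have h2 : t.countP q ≤ t.countP p :=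
    List.countP_mono_left (fun b hb => hmono b (by simp [hb]))
  simp only [List.countP_append, List.countP_cons, hpa, hqa]
  simp only [if_true, Bool.false_eq_true, if_false]
  omega

lemma dual_eq_compl {n : ℕ} {l : List (ℕ × ℕ)} (hd : DualityProp l)
    (hb : ∀ p ∈ l, 1 ≤ p.1 ∧ p.1 ≤ n ∧ 1 ≤ p.2 ∧ p.2 ≤ n)
    (hms : (↑(l.map Prod.snd) : Multiset ℕ)
      = Multiset.map (fun x => n + 1 - x) ↑(l.map Prod.fst)) :
    ∀ p ∈ l, p.2 = n + 1 - p.1 := by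
  intro p hp
  have hbp := hb p hp
  have key : l.countP (fun q => decide (p.1 ≤ q.1))
      = l.countP (fun q => decide (n + 1 - p.2 ≤ q.1)) := by
    have c1 : l.countP (fun q => decide (q.2 ≤ p.2))
        = l.countP (fun q => decide (p.1 ≤ q.1)) := by
      apply List.countP_congr
      intro q hq
      simp only [decide_eq_true_eq]
      constructor
      · intro h
        by_contra hlt
        push_neg at hlt
        have := (hd q hq p hp).2.1 hlt
        omega
      · intro h; exact (hd p hp q hq).1 h
    have c2 : l.countP (fun q => decide (q.2 ≤ p.2))
        = l.countP (fun q => decide (n + 1 - p.2 ≤ q.1)) := by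
      have e1 : l.countP (fun q => decide (q.2 ≤ p.2))
          = Multiset.countP (fun x => x ≤ p.2) ↑(l.map Prod.snd) := by
        rw [Multiset.coe_countP, List.countP_map]
        rfl
      have e2 : Multiset.countP (fun x => x ≤ p.2)
            (Multiset.map (fun x => n + 1 - x) ↑(l.map Prod.fst))
          = l.countP (fun q => decide (n + 1 - q.1 ≤ p.2)) := by
        rw [Multiset.countP_map, ← Multiset.countP_eq_card_filter, Multiset.coe_countP,
          List.countP_map]
        rfl
      rw [e1, hms, e2]
      apply List.countP_congr
      intro q hq
      have := hb q hq
      simp only [decide_eq_true_eq]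
      omega
    rw [← c1, c2]
  rcases Nat.lt_trichotomy p.1 (n + 1 - p.2) with hlt | heq | hgt
  · exfalso
    have := countP_lt_of_witness (l := l)
      (p := fun q => decide (p.1 ≤ q.1)) (q := fun q => decide (n + 1 - p.2 ≤ q.1))
      (fun b hb' h => by simp only [decide_eq_true_eq] at *; omega)
      hp (by simp) (by simp only [decide_eq_false_iff_not]; omega)
    omega
  · omega
  · exfalso
    have hmem : p.2 ∈ (↑(l.map Prod.snd) : Multiset ℕ) := by
      simp only [Multiset.mem_coe, List.mem_map]
      exact ⟨p, hp, rfl⟩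
    rw [hms] at hmem
    simp only [Multiset.mem_map, Multiset.mem_coe, List.mem_map] at hmem
    obtain ⟨y, ⟨q0, hq0, rfl⟩, hy⟩ := hmem
    have hbq0 := hb q0 hq0
    have hq0x : q0.1 = n + 1 - p.2 := by omega
    have := countP_lt_of_witness (l := l)
      (p := fun q => decide (n + 1 - p.2 ≤ q.1)) (q := fun q => decide (p.1 ≤ q.1))
      (fun b hb' h => by simp only [decide_eq_true_eq] at *; omega)
      hq0 (by simp only [decide_eq_true_eq]; omega)
      (by simp only [decide_eq_false_iff_not]; omega)
    omega

end Pf18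
end OBRSKPaper

namespace OBRSKPaper
namespace Pf18
open List

lemma ctp_entryDual (d : ℕ) (l : List (ℕ × ℕ)) :
    (chainToPair d l).entryDual =
      l.map (fun p => (p.1, 2 * d + 1 - p.1)) ++ l.map (fun p => (p.2, 2 * d + 1 - p.2)) ++
      (l.map (fun p => (2 * d + 1 - p.1, p.1))).reverse ++
      (l.map (fun p => (2 * d + 1 - p.2, p.2))).reverse := by
  have e1 : (chainToPair d l).a.zip (chainToPair d l).c.reverse
      = l.map (fun p => (p.1, 2 * d + 1 - p.1)) := by
    rw [ctp_a, ctp_c, List.reverse_reverse, zip_map']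
  have e2 : (chainToPair d l).b.zip (chainToPair d l).d.reverse
      = l.map (fun p => (p.2, 2 * d + 1 - p.2)) := by
    rw [ctp_b, ctp_d, List.reverse_reverse, zip_map']
  have e3 : (chainToPair d l).c.zip (chainToPair d l).a.reverse
      = (l.map (fun p => (2 * d + 1 - p.1, p.1))).reverse := by
    rw [ctp_a, ctp_c, zip_rev _ _ (by simp), zip_map']
  have e4 : (chainToPair d l).d.zip (chainToPair d l).b.reverse
      = (l.map (fun p => (2 * d + 1 - p.2, p.2))).reverse := by
    rw [ctp_b, ctp_d, zip_rev _ _ (by simp), zip_map']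
  rw [ArrayPair.entryDual, e1, e2, e3, e4]

lemma ssl_ctp (d : ℕ) (l : List (ℕ × ℕ)) (hb : ∀ p ∈ l, Bnd d p) (hs : SortedP l) :
    (chainToPair d l).SkewSymmLex := by
  have hT : (chainToPair d l).t = l.length := ctp_t d l
  refine ⟨?_, ?_, ?_, ?_, ?_, ?_, ?_, ?_⟩
  · refine ⟨?_, ?_, ?_⟩ <;> simp [chainToPair, ArrayPair.t]
  · intro x hx
    simp only [chainToPair, List.mem_append, List.mem_reverse, List.mem_map] at hx
    rcases hx with ((⟨p, hp, rfl⟩ | ⟨p, hp, rfl⟩) | ⟨p, hp, rfl⟩) | ⟨p, hp, rfl⟩ <;>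
      · have := hb p hp
        unfold Bnd at this
        omega
  · -- LexTwoRow b a
    intro k hk
    rw [ctp_b, List.length_map] at hk
    rw [ctp_a, ctp_b, getD_map _ _ (by omega : k + 1 < l.length),
      getD_map _ _ (by omega : k < l.length), getD_map _ _ (by omega : k + 1 < l.length),
      getD_map _ _ (by omega : k < l.length)]
    exact hs k hk
  · -- LexTwoRow d c
    intro k hk
    rw [ctp_d, List.length_reverse, List.length_map] at hk
    have hlk : k + 1 < l.length := hk
    have hj : l.length - 1 - (k + 1) + 1 = l.length - 1 - k := by omega
    rw [ctp_c, ctp_d,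
      getD_map_rev _ _ (by omega : k + 1 < l.length) rfl (by omega),
      getD_map_rev _ _ (by omega : k < l.length) rfl (by omega),
      getD_map_rev _ _ (by omega : k + 1 < l.length) rfl (by omega),
      getD_map_rev _ _ (by omega : k < l.length) rfl (by omega)]
    have h1 := hs (l.length - 1 - (k + 1)) (by omega)
    have hee : (l[l.length - 1 - (k + 1) + 1]'(by omega)) = (l[l.length - 1 - k]'(by omega)) := by
      congr 1
    rw [hee] at h1
    have hb1 := hb (l[l.length - 1 - (k + 1)]'(by omega)) (List.getElem_mem _)
    have hb2 := hb (l[l.length - 1 - k]'(by omega)) (List.getElem_mem _)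
    unfold Bnd at hb1 hb2
    obtain ⟨h11, h12⟩ := h1
    refine ⟨by omega, fun hEq => ?_⟩
    have : (l[l.length - 1 - k]'(by omega)).2 = (l[l.length - 1 - (k + 1)]'(by omega)).2 := by
      omega
    have := h12 this
    omega
  · -- a.zip d.reverse
    intro x hx
    rw [ctp_a, ctp_d, List.reverse_reverse, zip_map'] at hx
    obtain ⟨p, hp, rfl⟩ := List.mem_map.mp hx
    have := hb p hp
    unfold Bnd at this
    dsimp only
    omega
  · -- b.zip c.reverse
    intro x hx
    rw [ctp_b, ctp_c, List.reverse_reverse, zip_map'] at hx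
    obtain ⟨p, hp, rfl⟩ := List.mem_map.mp hx
    have := hb p hp
    unfold Bnd at this
    dsimp only
    omega
  · -- duality
    apply dualityProp_of_compl (d := d)
    intro q hq
    rw [ctp_entryDual] at hq
    simp only [List.mem_append, List.mem_reverse, List.mem_map] at hq
    rcases hq with ((⟨p, hp, rfl⟩ | ⟨p, hp, rfl⟩) | ⟨p, hp, rfl⟩) | ⟨p, hp, rfl⟩ <;>
      · have := hb p hp
        unfold Bnd at this
        dsimp only
        omega
  · -- final condition
    intro i hi
    rw [hT] at hi
    rw [ctp_a, ctp_b, ctp_c, ctp_d, hT,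
      getD_map _ _ (by omega : i < l.length), getD_map _ _ (by omega : i < l.length),
      getD_map_rev _ _ (by omega : l.length - 1 - i < l.length)
        (by omega : l.length - 1 - (l.length - 1 - i) = i) (by omega),
      getD_map_rev _ _ (by omega : l.length - 1 - i < l.length)
        (by omega : l.length - 1 - (l.length - 1 - i) = i) (by omega)]
    have := hb (l[i]'hi) (List.getElem_mem _)
    unfold Bnd at this
    constructor <;> intro <;> omega

lemma negPart_ctp (d : ℕ) (l : List (ℕ × ℕ)) (hb : ∀ p ∈ l, Bnd d p) :
    (chainToPair d l).negPart = chainToPair d (chainNeg l) := by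
  have key : ((chainToPair d l).c.zip (chainToPair d l).d).filter
        (fun p => decide (p.2 < p.1))
      = ((chainNeg l).map (fun p => (2 * d + 1 - p.1, 2 * d + 1 - p.2))).reverse := by
    rw [ctp_zip_cd, List.filter_reverse, List.filter_map]
    rw [chainNeg]
    congr 2
    apply List.filter_congr
    intro p hp
    have := hb p hp
    unfold Bnd at this
    simp only [Function.comp_apply, decide_eq_decide]
    omega
  apply AP_ext
  · show (((chainToPair d l).a.zip (chainToPair d l).b).filter
        (fun p => decide (p.1 < p.2))).map Prod.fst = (chainNeg l).map Prod.fst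
    rw [ctp_zip_ab]; rfl
  · show (((chainToPair d l).a.zip (chainToPair d l).b).filter
        (fun p => decide (p.1 < p.2))).map Prod.snd = (chainNeg l).map Prod.snd
    rw [ctp_zip_ab]; rfl
  · show (((chainToPair d l).c.zip (chainToPair d l).d).filter
        (fun p => decide (p.2 < p.1))).map Prod.fst
      = ((chainNeg l).map (fun p => 2 * d + 1 - p.1)).reverse
    rw [key, List.map_reverse, List.map_map]
    rfl
  · show (((chainToPair d l).c.zip (chainToPair d l).d).filter
        (fun p => decide (p.2 < p.1))).map Prod.snd
      = ((chainNeg l).map (fun p => 2 * d + 1 - p.2)).reverse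
    rw [key, List.map_reverse, List.map_map]
    rfl

lemma posPart_ctp (d : ℕ) (l : List (ℕ × ℕ)) (hb : ∀ p ∈ l, Bnd d p) :
    (chainToPair d l).posPart = chainToPair d (chainPos l) := by
  have key : ((chainToPair d l).c.zip (chainToPair d l).d).filter
        (fun p => decide (p.1 < p.2))
      = ((chainPos l).map (fun p => (2 * d + 1 - p.1, 2 * d + 1 - p.2))).reverse := by
    rw [ctp_zip_cd, List.filter_reverse, List.filter_map]
    rw [chainPos]
    congr 2
    apply List.filter_congr
    intro p hp
    have := hb p hp
    unfold Bnd at this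
    simp only [Function.comp_apply, decide_eq_decide]
    omega
  apply AP_ext
  · show (((chainToPair d l).a.zip (chainToPair d l).b).filter
        (fun p => decide (p.2 < p.1))).map Prod.fst = (chainPos l).map Prod.fst
    rw [ctp_zip_ab]; rfl
  · show (((chainToPair d l).a.zip (chainToPair d l).b).filter
        (fun p => decide (p.2 < p.1))).map Prod.snd = (chainPos l).map Prod.snd
    rw [ctp_zip_ab]; rfl
  · show (((chainToPair d l).c.zip (chainToPair d l).d).filter
        (fun p => decide (p.1 < p.2))).map Prod.fst
      = ((chainPos l).map (fun p => 2 * d + 1 - p.1)).reverse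
    rw [key, List.map_reverse, List.map_map]
    rfl
  · show (((chainToPair d l).c.zip (chainToPair d l).d).filter
        (fun p => decide (p.1 < p.2))).map Prod.snd
      = ((chainPos l).map (fun p => 2 * d + 1 - p.2)).reverse
    rw [key, List.map_reverse, List.map_map]
    rfl

lemma obrsk_empty (d : ℕ) : OBRSK (chainToPair d []) = ⟨[], []⟩ := by
  simp [OBRSK, OBRSKneg, OBRSKpos, Lmap, ArrayPair.negPart, ArrayPair.posPart, chainToPair,
    stepState, ArrayPair.quads, ArrayPair.t, iota]

lemma obrsk_empty_up (d : ℕ) : (OBRSK (chainToPair d [])).up = 0 := by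
  rw [obrsk_empty]; rfl

lemma obrsk_empty_down (d : ℕ) : (OBRSK (chainToPair d [])).down = 0 := by
  rw [obrsk_empty]; rfl

end Pf18
end OBRSKPaper

namespace OBRSKPaper
namespace Pf18
open List

lemma getElem_congr_idx {α : Type*} (l : List α) {i j : ℕ} (hij : i = j) (hi : i < l.length) :
    l[i]'hi = l[j]'(hij ▸ hi) := by cases hij; rfl

lemma swap_mem_zip {l1 l2 : List ℕ} (h : l1.length = l2.length) {x y : ℕ}
    (hm : (x, y) ∈ l1.zip l2) : (y, x) ∈ l2.zip l1 := by
  obtain ⟨i, hi, he⟩ := List.mem_iff_getElem.mp hm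
  rw [List.length_zip, Nat.lt_min] at hi
  rw [List.getElem_zip, Prod.mk.injEq] at he
  refine List.mem_iff_getElem.mpr ⟨i, by rw [List.length_zip, Nat.lt_min]; omega, ?_⟩
  rw [List.getElem_zip, he.1, he.2]

set_option maxHeartbeats 1000000 in
lemma pi_pos_dual (d : ℕ) (π : ArrayPair) (hlex : π.SkewSymmLex)
    (hbnd : ∀ p ∈ π.a.zip π.b, Bnd d p)
    (hms : (↑(π.d.zip π.c) : Multiset (ℕ × ℕ)) = hashMS d ↑(π.a.zip π.b)) :
    ∀ i < π.t, π.c.getD (π.t - 1 - i) 0 = 2 * d + 1 - π.a.getD i 0 ∧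
               π.d.getD (π.t - 1 - i) 0 = 2 * d + 1 - π.b.getD i 0 := by
  obtain ⟨⟨hal, hcl, hdl⟩, _, _, _, _, _, hdual, _⟩ := hlex
  have hbl : π.b.length = π.t := rfl
  -- multiset identities for the rows
  have hcrow : (↑π.c : Multiset ℕ) = Multiset.map (fun x => 2 * d + 1 - x) ↑π.a := by
    have e1 : π.c = (π.d.zip π.c).map Prod.snd := (List.map_snd_zip (by omega)).symm
    have e2 : π.a = (π.a.zip π.b).map Prod.fst := (List.map_fst_zip (by omega)).symm
    rw [e1, e2, ← Multiset.map_coe, ← Multiset.map_coe, hms, hashMS, Multiset.map_map,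
      Multiset.map_map]
    rfl
  have hdrow : (↑π.d : Multiset ℕ) = Multiset.map (fun x => 2 * d + 1 - x) ↑π.b := by
    have e1 : π.d = (π.d.zip π.c).map Prod.fst := (List.map_fst_zip (by omega)).symm
    have e2 : π.b = (π.a.zip π.b).map Prod.snd := (List.map_snd_zip (by omega)).symm
    rw [e1, e2, ← Multiset.map_coe, ← Multiset.map_coe, hms, hashMS, Multiset.map_map,
      Multiset.map_map]
    rfl
  -- bounds for row values
  have hav : ∀ x ∈ π.a, 1 ≤ x ∧ x ≤ 2 * d := by
    intro x hx
    have : x ∈ (π.a.zip π.b).map Prod.fst := by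
      rw [List.map_fst_zip (by omega)]; exact hx
    obtain ⟨p, hp, rfl⟩ := List.mem_map.mp this
    have := hbnd p hp; unfold Bnd at this; omega
  have hbv : ∀ x ∈ π.b, 1 ≤ x ∧ x ≤ 2 * d := by
    intro x hx
    have : x ∈ (π.a.zip π.b).map Prod.snd := by
      rw [List.map_snd_zip (by omega)]; exact hx
    obtain ⟨p, hp, rfl⟩ := List.mem_map.mp this
    have := hbnd p hp; unfold Bnd at this; omega
  have hcv : ∀ x ∈ π.c, 1 ≤ x ∧ x ≤ 2 * d := by
    intro x hx
    have : x ∈ (↑π.c : Multiset ℕ) := Multiset.mem_coe.mpr hx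
    rw [hcrow] at this
    obtain ⟨y, hy, rfl⟩ := Multiset.mem_map.mp this
    have := hav y (Multiset.mem_coe.mp hy)
    omega
  have hdv : ∀ x ∈ π.d, 1 ≤ x ∧ x ≤ 2 * d := by
    intro x hx
    have : x ∈ (↑π.d : Multiset ℕ) := Multiset.mem_coe.mpr hx
    rw [hdrow] at this
    obtain ⟨y, hy, rfl⟩ := Multiset.mem_map.mp this
    have := hbv y (Multiset.mem_coe.mp hy)
    omega
  -- the two sublists of entryDual
  have hd1 : DualityProp (π.a.zip π.c.reverse) := by
    intro p hp q hq
    exact hdual p (List.mem_append_left _ (List.mem_append_left _ (List.mem_append_left _ hp)))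
      q (List.mem_append_left _ (List.mem_append_left _ (List.mem_append_left _ hq)))
  have hd2 : DualityProp (π.b.zip π.d.reverse) := by
    intro p hp q hq
    exact hdual p
      (List.mem_append_left _ (List.mem_append_left _ (List.mem_append_right _ hp)))
      q (List.mem_append_left _ (List.mem_append_left _ (List.mem_append_right _ hq)))
  have hk1 : ∀ p ∈ π.a.zip π.c.reverse, p.2 = 2 * d + 1 - p.1 := by
    apply dual_eq_compl (n := 2 * d) hd1
    · intro p hp
      obtain ⟨h1, h2⟩ := List.of_mem_zip (a := p.1) (b := p.2) (by simpa using hp)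
      have := hav _ h1
      have := hcv _ (List.mem_reverse.mp h2)
      omega
    · rw [List.map_fst_zip (by simp; omega), List.map_snd_zip (by simp; omega)]
      rw [Multiset.coe_reverse]
      exact hcrow
  have hk2 : ∀ p ∈ π.b.zip π.d.reverse, p.2 = 2 * d + 1 - p.1 := by
    apply dual_eq_compl (n := 2 * d) hd2
    · intro p hp
      obtain ⟨h1, h2⟩ := List.of_mem_zip (a := p.1) (b := p.2) (by simpa using hp)
      have := hbv _ h1
      have := hdv _ (List.mem_reverse.mp h2)
      omega
    · rw [List.map_fst_zip (by simp; omega), List.map_snd_zip (by simp; omega)]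
      rw [Multiset.coe_reverse]
      exact hdrow
  intro i hi
  constructor
  · have hmem : (π.a[i]'(by omega), π.c.reverse[i]'(by simp; omega)) ∈ π.a.zip π.c.reverse := by
      refine List.mem_iff_getElem.mpr ⟨i, by simp [List.length_zip]; omega, ?_⟩
      rw [List.getElem_zip]
    have := hk1 _ hmem
    dsimp only at this
    rw [List.getElem_reverse] at this
    rw [List.getD_eq_getElem _ _ (by omega : π.t - 1 - i < π.c.length),
      List.getD_eq_getElem _ _ (by omega : i < π.a.length)]
    rw [getElem_congr_idx π.c (show π.c.length - 1 - i = π.t - 1 - i from by omega)] at this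
    exact this
  · have hmem : (π.b[i]'(by omega), π.d.reverse[i]'(by simp; omega)) ∈ π.b.zip π.d.reverse := by
      refine List.mem_iff_getElem.mpr ⟨i, by simp [List.length_zip]; omega, ?_⟩
      rw [List.getElem_zip]
    have := hk2 _ hmem
    dsimp only at this
    rw [List.getElem_reverse] at this
    rw [List.getD_eq_getElem _ _ (by omega : π.t - 1 - i < π.d.length),
      List.getD_eq_getElem _ _ (by omega : i < π.b.length)]
    rw [getElem_congr_idx π.d (show π.d.length - 1 - i = π.t - 1 - i from by omega)] at this
    exact this

end Pf18
end OBRSKPaper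

namespace OBRSKPaper
namespace Pf18
open List

set_option maxHeartbeats 1000000 in
lemma sigma_ctp (d : ℕ) (π σ : ArrayPair)
    (hposc : ∀ i < π.t, π.c.getD (π.t - 1 - i) 0 = 2 * d + 1 - π.a.getD i 0 ∧
                        π.d.getD (π.t - 1 - i) 0 = 2 * d + 1 - π.b.getD i 0)
    (hπa : π.a.length = π.t)
    (hDC : DualChainIn π σ) :
    σ = chainToPair d (σ.a.zip σ.b) := by
  obtain ⟨⟨hσlex, hca, hcb⟩, hmem1, hmem2, hdc⟩ := hDC
  obtain ⟨⟨hσa, hσc, hσd⟩, -⟩ := hσlex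
  have hσb : σ.b.length = σ.t := rfl
  have hπb : π.b.length = π.t := rfl
  have key : ∀ i, i < σ.t → σ.c.getD (σ.t - 1 - i) 0 = 2 * d + 1 - σ.a.getD i 0 ∧
                        σ.d.getD (σ.t - 1 - i) 0 = 2 * d + 1 - σ.b.getD i 0 := by
    intro i hi
    have hizip : i < (σ.a.zip σ.b).length := by rw [List.length_zip, Nat.lt_min]; omega
    have hgets : (σ.a.zip σ.b)[i]'hizip = (σ.a.getD i 0, σ.b.getD i 0) := by
      rw [List.getElem_zip, List.getD_eq_getElem _ _ (by omega : i < σ.a.length),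
        List.getD_eq_getElem _ _ (by omega : i < σ.b.length)]
    have hpair : (σ.a.getD i 0, σ.b.getD i 0) ∈ π.a.zip π.b := by
      apply hmem1
      rw [← hgets]; exact List.getElem_mem _
    have hsw : (σ.b.getD i 0, σ.a.getD i 0) ∈ π.b.zip π.a := swap_mem_zip (by omega) hpair
    have hjlt : (π.b.zip π.a).findIdx (fun x => x == (σ.b.getD i 0, σ.a.getD i 0))
        < (π.b.zip π.a).length :=
      List.findIdx_lt_length.mpr ⟨_, hsw, by simp⟩
    set j := (π.b.zip π.a).findIdx (fun x => x == (σ.b.getD i 0, σ.a.getD i 0)) with hjdef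
    have hjt : j < π.t := by
      rw [List.length_zip, Nat.lt_min] at hjlt; omega
    have hgot : ((π.b.zip π.a)[j]'hjlt) = (σ.b.getD i 0, σ.a.getD i 0) :=
      eq_of_beq (List.findIdx_getElem (w := hjlt))
    rw [List.getElem_zip, Prod.mk.injEq] at hgot
    have h4 := hdc i hi
    rw [← hjdef, Prod.mk.injEq] at h4
    have hπd := hposc j hjt
    constructor
    · rw [← h4.1, hπd.1, List.getD_eq_getElem _ _ (by omega : j < π.a.length), hgot.2]
    · rw [← h4.2, hπd.2, List.getD_eq_getElem _ _ (by omega : j < π.b.length), hgot.1]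
  have hzl : (σ.a.zip σ.b).length = σ.t := by rw [List.length_zip]; omega
  apply AP_ext
  · rw [ctp_a, List.map_fst_zip (by omega)]
  · rw [ctp_b, List.map_snd_zip (by omega)]
  · rw [ctp_c]
    apply List.ext_getElem (by simp only [List.length_reverse, List.length_map]; omega)
    intro k h1 h2
    have hk : k < σ.t := by omega
    have hkey := (key (σ.t - 1 - k) (by omega)).1
    rw [show σ.t - 1 - (σ.t - 1 - k) = k from by omega] at hkey
    rw [List.getD_eq_getElem _ _ (by omega : k < σ.c.length),
      List.getD_eq_getElem _ _ (by omega : σ.t - 1 - k < σ.a.length)] at hkey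
    rw [List.getElem_reverse, List.getElem_map, List.getElem_zip]
    dsimp only
    rw [getElem_congr_idx σ.a
      (show ((σ.a.zip σ.b).map (fun p => 2 * d + 1 - p.1)).length - 1 - k = σ.t - 1 - k from by
        simp only [List.length_map, List.length_zip]; omega)]
    exact hkey
  · rw [ctp_d]
    apply List.ext_getElem (by simp only [List.length_reverse, List.length_map]; omega)
    intro k h1 h2
    have hk : k < σ.t := by omega
    have hkey := (key (σ.t - 1 - k) (by omega)).2
    rw [show σ.t - 1 - (σ.t - 1 - k) = k from by omega] at hkey
    rw [List.getD_eq_getElem _ _ (by omega : k < σ.d.length),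
      List.getD_eq_getElem _ _ (by omega : σ.t - 1 - k < σ.b.length)] at hkey
    rw [List.getElem_reverse, List.getElem_map, List.getElem_zip]
    dsimp only
    rw [getElem_congr_idx σ.b
      (show ((σ.a.zip σ.b).map (fun p => 2 * d + 1 - p.2)).length - 1 - k = σ.t - 1 - k from by
        simp only [List.length_map, List.length_zip]; omega)]
    exact hkey

lemma countP_le_of_pointwise : ∀ (s t : List ℕ) (hlen : s.length = t.length),
    (∀ i (h : i < s.length), s[i]'h ≤ t[i]'(hlen ▸ h)) →
    ∀ z : ℕ, t.countP (fun x => decide (x ≤ z)) ≤ s.countP (fun x => decide (x ≤ z))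
  | [], [], _, _, z => le_refl _
  | [], b :: t, h, _, z => by simp at h
  | a :: s, [], h, _, z => by simp at h
  | a :: s, b :: t, h, hp, z => by
      have h0 : a ≤ b := by
        have := hp 0 (by simp)
        simpa using this
      have ih := countP_le_of_pointwise s t (by simpa using h)
        (fun i hi => by
          have := hp (i + 1) (by simpa using Nat.succ_lt_succ hi)
          simpa using this) z
      simp only [List.countP_cons]
      by_cases hbz : b ≤ z
      · rw [if_pos (decide_eq_true hbz), if_pos (decide_eq_true (le_trans h0 hbz))]
        omega
      · rw [if_neg (by simp [hbz])]
        split_ifs <;> omega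

lemma card_filter_le_of_IleD {v w : Finset ℕ} (h : IleD v w) (z : ℕ) :
    (w.filter (fun x => x ≤ z)).card ≤ (v.filter (fun x => x ≤ z)).card := by
  have hs : ∀ u : Finset ℕ, (u.filter (fun x => x ≤ z)).card
      = (u.sort (· ≤ ·)).countP (fun x => decide (x ≤ z)) := by
    intro u
    calc (u.filter (fun x => x ≤ z)).card
        = (Multiset.filter (fun x => x ≤ z) u.val).card := by rw [← Finset.filter_val]; rfl
      _ = Multiset.countP (fun x => x ≤ z) u.val := (Multiset.countP_eq_card_filter _ _).symm
      _ = Multiset.countP (fun x => x ≤ z) ↑(u.sort (· ≤ ·)) := by rw [Finset.sort_eq]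
      _ = (u.sort (· ≤ ·)).countP (fun x => decide (x ≤ z)) := Multiset.coe_countP _ _
  rw [hs v, hs w]
  apply countP_le_of_pointwise _ _ (by rw [Finset.length_sort, Finset.length_sort, h.1])
  intro i hi
  have hcc := h.1
  have hi' : i < v.card := by rwa [Finset.length_sort] at hi
  have h2 := h.2 i hi'
  rwa [List.getD_eq_getElem _ _ hi,
    List.getD_eq_getElem _ _ (by rw [Finset.length_sort]; omega)] at h2

lemma card_filter_sdiff_le {v w : Finset ℕ} (h : IleD v w) (z : ℕ) :
    ((w \ v).filter (fun x => x ≤ z)).card ≤ ((v \ w).filter (fun x => x ≤ z)).card := by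
  have hsplit : ∀ u u' : Finset ℕ, (u.filter (fun x => x ≤ z)).card
      = ((u \ u').filter (fun x => x ≤ z)).card + ((u ∩ u').filter (fun x => x ≤ z)).card := by
    intro u u'
    conv_lhs => rw [← Finset.sdiff_union_inter u u']
    rw [Finset.filter_union]
    exact Finset.card_union_of_disjoint
      (Finset.disjoint_filter_filter (Finset.disjoint_sdiff_inter u u'))
  have h1 := card_filter_le_of_IleD h z
  have e1 := hsplit v w
  have e2 := hsplit w v
  rw [Finset.inter_comm w v] at e2
  omega

lemma card_key (z : ℕ) (M : Multiset (ℕ × ℕ)) (f : ℕ × ℕ → ℕ) (F : Finset ℕ)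
    (hMF : M.map f = F.val) :
    (Multiset.filter (fun p => f p ≤ z) M).card = (F.filter (fun x => x ≤ z)).card := by
  calc (Multiset.filter (fun p => f p ≤ z) M).card
      = Multiset.countP (fun x => x ≤ z) (Multiset.map f M) := (Multiset.countP_map f M (fun x => x ≤ z)).symm
    _ = Multiset.countP (fun x => x ≤ z) F.val := by rw [hMF]
    _ = (Multiset.filter (fun x => x ≤ z) F.val).card := Multiset.countP_eq_card_filter _ _
    _ = (F.filter (fun x => x ≤ z)).card := by rw [← Finset.filter_val]; rfl

end Pf18
end OBRSKPaper

open OBRSKPaper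

/-- For `α ≤ β ≤ γ` in `Ĩ(d)`, `T_α`, `W_γ` as in the paper, and every
nonempty multiset `U` on `OR(β)`, the following are equivalent:
(a) the underlying set of `U` contains no nonvanishing extended `β`-chain `C` such that
either (`C⁻` is nonempty and `T_α ≰ OBRSK(ψ⁻¹({C⁻,(C⁻)^#}))^up`) or (`C⁺` is nonempty and
`OBRSK(ψ⁻¹({C⁺,(C⁺)^#}))^down ≰ W_γ`);
(b) the pair `{U,U^#}` is bounded by `T_α, W_γ`. -/
theorem stmt18 (d : ℕ) (hd : 0 < d) (α β γ : Finset ℕ)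
    (hα : α ∈ Itilde d) (hβ : β ∈ Itilde d) (hγ : γ ∈ Itilde d)
    (hαβ : IleD α β) (hβγ : IleD β γ)
    (Tα Wγ : Finset (ℕ × ℕ))
    (hTα1 : Tα.val.map Prod.fst = (α \ β).val)
    (hTα2 : Tα.val.map Prod.snd = (β \ α).val)
    (hWγ1 : Wγ.val.map Prod.fst = (γ \ β).val)
    (hWγ2 : Wγ.val.map Prod.snd = (β \ γ).val)
    (hTsub : ∀ p ∈ Tα, p.1 ∈ Finset.Icc 1 (2 * d) \ β ∧ p.2 ∈ β)
    (hWsub : ∀ p ∈ Wγ, p.1 ∈ Finset.Icc 1 (2 * d) \ β ∧ p.2 ∈ β)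
    (U : Multiset (ℕ × ℕ)) (hU0 : U ≠ 0) (hUOR : ∀ x ∈ U, x ∈ ORset d β) :
    (¬ ∃ ch : List (ℕ × ℕ), IsExtChain ch ∧ (∀ x ∈ ch, x ∈ U) ∧
        (chainNeg ch ≠ [] ∨ chainPos ch ≠ []) ∧
        ((chainNeg ch ≠ [] ∧
            ¬ msLE ↑Tα.val (OBRSK (chainToPair d (chainNeg ch))).up) ∨
         (chainPos ch ≠ [] ∧
            ¬ msLE (OBRSK (chainToPair d (chainPos ch))).down ↑Wγ.val)))
      ↔
      (∀ π : ArrayPair, π.SkewSymmLex → π.toMS = (U, hashMS d U) →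
        PairBounded π Tα Wγ) := by
  classical
  have hβsub : β ⊆ Finset.Icc 1 (2 * d) := hβ.1
  have hUb : ∀ p ∈ U, Pf18.Bnd d p := by
    intro p hp
    obtain ⟨h1, h2, h3, h4⟩ := hUOR p hp
    have h5 := hβsub h3
    rw [Finset.mem_Icc] at h1 h5
    exact ⟨by omega, by omega, by omega⟩
  have hTle : msLE ↑Tα.val 0 := by
    intro z
    simp only [Multiset.filter_zero, Multiset.card_zero]
    rw [Pf18.card_key z Tα.val Prod.fst (α \ β) hTα1,
        Pf18.card_key z Tα.val Prod.snd (β \ α) hTα2]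
    have := Pf18.card_filter_sdiff_le hαβ z
    omega
  have hWle : msLE 0 ↑Wγ.val := by
    intro z
    simp only [Multiset.filter_zero, Multiset.card_zero]
    rw [Pf18.card_key z Wγ.val Prod.fst (γ \ β) hWγ1,
        Pf18.card_key z Wγ.val Prod.snd (β \ γ) hWγ2]
    have := Pf18.card_filter_sdiff_le hβγ z
    omega
  constructor
  · intro hno π hπlex hπms
    have hab : (↑(π.a.zip π.b) : Multiset (ℕ × ℕ)) = U := congrArg Prod.fst hπms
    have hdcms : (↑(π.d.zip π.c) : Multiset (ℕ × ℕ)) = hashMS d U := congrArg Prod.snd hπms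
    have hbnd : ∀ p ∈ π.a.zip π.b, Pf18.Bnd d p := fun p hp =>
      hUb p (by rw [← hab]; exact Multiset.mem_coe.mpr hp)
    have hposd := Pf18.pi_pos_dual d π hπlex hbnd (by rw [hdcms, hab])
    have hπa : π.a.length = π.t := hπlex.1.1
    have setup : ∀ σ : ArrayPair, DualChainIn π σ →
        σ.negPart = chainToPair d (chainNeg (σ.a.zip σ.b)) ∧
        σ.posPart = chainToPair d (chainPos (σ.a.zip σ.b)) ∧
        IsExtChain (σ.a.zip σ.b) ∧ (∀ x ∈ σ.a.zip σ.b, x ∈ U) := by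
      intro σ hσDC
      have hσeq := Pf18.sigma_ctp d π σ hposd hπa hσDC
      have hchU : ∀ x ∈ σ.a.zip σ.b, x ∈ U := fun x hx => by
        rw [← hab]; exact Multiset.mem_coe.mpr (hσDC.2.1 x hx)
      have hchb : ∀ x ∈ σ.a.zip σ.b, Pf18.Bnd d x := fun x hx => hUb x (hchU x hx)
      have hσal : σ.a.length = σ.t := hσDC.1.1.1.1
      have hσbl : σ.b.length = σ.t := rfl
      refine ⟨?_, ?_, ?_, hchU⟩
      · conv_lhs => rw [hσeq]
        exact Pf18.negPart_ctp d _ hchb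
      · conv_lhs => rw [hσeq]
        exact Pf18.posPart_ctp d _ hchb
      · exact Pf18.chain_zip (by omega) hσDC.1.2.1 hσDC.1.2.2
    constructor
    · intro σ hσDC
      obtain ⟨hneg, hpos, hchain, hchU⟩ := setup σ hσDC
      rw [hneg]
      by_cases hne : chainNeg (σ.a.zip σ.b) = []
      · rw [hne, Pf18.obrsk_empty_up]
        exact hTle
      · by_contra hcon
        exact hno ⟨σ.a.zip σ.b, hchain, hchU, Or.inl hne, Or.inl ⟨hne, hcon⟩⟩
    · intro σ hσDC
      obtain ⟨hneg, hpos, hchain, hchU⟩ := setup σ hσDC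
      rw [hpos]
      by_cases hne : chainPos (σ.a.zip σ.b) = []
      · rw [hne, Pf18.obrsk_empty_down]
        exact hWle
      · by_contra hcon
        exact hno ⟨σ.a.zip σ.b, hchain, hchU, Or.inr hne, Or.inr ⟨hne, hcon⟩⟩
  · rintro hall ⟨ch, hchain, hchU, hnv, hbad⟩
    set L := U.toList.mergeSort Pf18.leB with hLdef
    have hLU : (↑L : Multiset (ℕ × ℕ)) = U := by
      rw [hLdef, Multiset.coe_eq_coe.mpr (List.mergeSort_perm _ _), Multiset.coe_toList]
    have hLb : ∀ p ∈ L, Pf18.Bnd d p := fun p hp =>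
      hUb p (by rw [← hLU]; exact Multiset.mem_coe.mpr hp)
    have hπlex := Pf18.ssl_ctp d L hLb (Pf18.sortedP_mergeSort _)
    have hπms : (chainToPair d L).toMS = (U, hashMS d U) := by
      rw [ArrayPair.toMS, Pf18.ctp_zip_ab, Pf18.ctp_zip_dc, Prod.mk.injEq]
      refine ⟨hLU, ?_⟩
      rw [Multiset.coe_reverse, ← Multiset.map_coe, hLU, hashMS]
    have hPB := hall (chainToPair d L) hπlex hπms
    have hchb : ∀ p ∈ ch, Pf18.Bnd d p := fun p hp => hUb p (hchU p hp)
    have hσlex := Pf18.ssl_ctp d ch hchb (Pf18.sortedP_of_chain hchain)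
    have hchL : ∀ x ∈ ch, x ∈ L := fun x hx => by
      rw [← Multiset.mem_coe, hLU]; exact hchU x hx
    have hDC : DualChainIn (chainToPair d L) (chainToPair d ch) := by
      refine ⟨⟨hσlex, ?_, ?_⟩, ?_, ?_, ?_⟩
      · rw [Pf18.ctp_a, List.Chain', List.isChain_map]
        exact List.IsChain.imp (fun a b hab => hab.1) hchain
      · rw [Pf18.ctp_b, List.Chain', List.isChain_map]
        exact List.IsChain.imp (fun a b hab => hab.2) hchain
      · rw [Pf18.ctp_zip_ab, Pf18.ctp_zip_ab]
        exact hchL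
      · rw [Pf18.ctp_zip_dc, Pf18.ctp_zip_dc]
        intro x hx
        rw [List.mem_reverse, List.mem_map] at hx ⊢
        obtain ⟨q, hq, rfl⟩ := hx
        exact ⟨q, hchL q hq, rfl⟩
      · intro i hi
        rw [Pf18.ctp_t] at hi
        have hsa : (chainToPair d ch).a.getD i 0 = (ch[i]'hi).1 := by
          rw [Pf18.ctp_a]; exact Pf18.getD_map _ _ hi
        have hsb : (chainToPair d ch).b.getD i 0 = (ch[i]'hi).2 := by
          rw [Pf18.ctp_b]; exact Pf18.getD_map _ _ hi
        rw [hsa, hsb]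
        have hmemL : ch[i]'hi ∈ L := hchL _ (List.getElem_mem _)
        have hswm : ((ch[i]'hi).2, (ch[i]'hi).1)
            ∈ (chainToPair d L).b.zip (chainToPair d L).a := by
          rw [Pf18.ctp_zip_ba]
          exact List.mem_map.mpr ⟨_, hmemL, rfl⟩
        have hjlt : ((chainToPair d L).b.zip (chainToPair d L).a).findIdx
              (fun x => x == ((ch[i]'hi).2, (ch[i]'hi).1))
            < ((chainToPair d L).b.zip (chainToPair d L).a).length :=
          List.findIdx_lt_length.mpr ⟨_, hswm, by simp⟩
        set j := ((chainToPair d L).b.zip (chainToPair d L).a).findIdx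
          (fun x => x == ((ch[i]'hi).2, (ch[i]'hi).1)) with hjdef
        have hjL : j < L.length := by
          rw [Pf18.ctp_zip_ba, List.length_map] at hjlt
          exact hjlt
        have hgot := eq_of_beq (List.findIdx_getElem (w := hjlt))
        have hLj : L[j]'hjL = ch[i]'hi := by
          have e : ((chainToPair d L).b.zip (chainToPair d L).a)[j]'hjlt
              = ((L[j]'hjL).2, (L[j]'hjL).1) := by
            rw [List.getElem_of_eq (Pf18.ctp_zip_ba d L), List.getElem_map]
          rw [e, Prod.mk.injEq] at hgot
          exact Prod.ext hgot.2 hgot.1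
        have htL : (chainToPair d L).t = L.length := Pf18.ctp_t d L
        have htc : (chainToPair d ch).t = ch.length := Pf18.ctp_t d ch
        rw [Pf18.ctp_c d L, Pf18.ctp_d d L, Pf18.ctp_c d ch, Pf18.ctp_d d ch, htL, htc,
          Pf18.getD_map_rev _ _ (by omega) (by omega) hjL,
          Pf18.getD_map_rev _ _ (by omega) (by omega) hjL,
          Pf18.getD_map_rev _ _ (by omega) (by omega) hi,
          Pf18.getD_map_rev _ _ (by omega) (by omega) hi,
          hLj]
    rcases hbad with ⟨hne, hnot⟩ | ⟨hne, hnot⟩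
    · refine hnot ?_
      have := hPB.1 (chainToPair d ch) hDC
      rwa [Pf18.negPart_ctp d ch hchb] at this
    · refine hnot ?_
      have := hPB.2 (chainToPair d ch) hDC
      rwa [Pf18.posPart_ctp d ch hchb] at this
end
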